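/- arXiv:0901.0856 — 5 statements merged into one kernel-verified Lean document; each statement's English description precedes it below -/
import Mathlib

section
/- For every integer n ≥ 1, the sum over all integers p with p ≠ n and p ≠ -n of 1/(n²-p²)² is strictly less than 4/n². -/
open Real

theorem stmt_1 (n : ℤ) (hn : 1 ≤ n) :
    ∑' p : {p : ℤ // p ≠ n ∧ p ≠ -n},
      (1 : ℝ) / ((n ^ 2 - (p : ℤ) ^ 2 : ℤ) : ℝ) ^ 2 < 4 / (n : ℝ) ^ 2 := by
  have hn0 : (0:ℝ) < (n:ℝ) := by exact_mod_cast hn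
  -- the sum over ℤ of 1/k^2
  have hsum2 : Summable (fun k : ℤ => 1/(k:ℝ)^2) :=
    Real.summable_one_div_int_pow.mpr one_lt_two
  have hsum1 : HasSum (fun m : ℕ => 1/((m:ℝ)+1)^2) (π^2/6) := by
    have := (hasSum_nat_add_iff' (f := fun m : ℕ => 1/(m:ℝ)^2) 1).mpr hasSum_zeta_two
    simpa using this
  have hT : HasSum (fun k : ℤ => 1/(k:ℝ)^2) (π^2/3) := by
    have h := hasSum_zeta_two.int_rec hsum1
    have he : (fun t : ℤ => Int.rec (fun n : ℕ => (1:ℝ)/(n:ℝ)^2)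
        (fun m : ℕ => 1/((m:ℝ)+1)^2) t) = fun k : ℤ => 1/(k:ℝ)^2 := by
      funext k
      cases k with
      | ofNat m => simp
      | negSucc m => push_cast [Int.cast_negSucc]; ring_nf
    rw [he] at h
    convert h using 1
    ring
  -- the dominating function
  set G : ℤ → ℝ := fun p => 1/(2*(n:ℝ)^2) * (1/((n:ℝ)-p)^2 + 1/((n:ℝ)+p)^2) with hGdef
  have hGA : Summable (fun p : ℤ => 1/((n:ℝ)-p)^2) := by
    have := hsum2.comp_injective (Equiv.subLeft n).injective
    refine this.congr fun p => ?_
    simp only [Function.comp, Equiv.subLeft_apply]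
    push_cast
    ring_nf
  have hGB : Summable (fun p : ℤ => 1/((n:ℝ)+p)^2) := by
    have := hsum2.comp_injective (Equiv.addLeft n).injective
    refine this.congr fun p => ?_
    simp only [Function.comp, Equiv.coe_addLeft]
    push_cast
    ring_nf
  have hGsum : Summable G := ((hGA.add hGB).mul_left _)
  -- termwise bound on the subtype
  have key : ∀ p : {p : ℤ // p ≠ n ∧ p ≠ -n},
      (1 : ℝ) / ((n ^ 2 - (p : ℤ) ^ 2 : ℤ) : ℝ) ^ 2 ≤ G (p : ℤ) := by
    rintro ⟨p, hp1, hp2⟩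
    set a : ℝ := (n:ℝ) - p with ha
    set b : ℝ := (n:ℝ) + p with hb
    have ha0 : a ≠ 0 := by
      rw [ha, sub_ne_zero]
      intro h
      exact hp1 (by exact_mod_cast h.symm)
    have hb0 : b ≠ 0 := by
      rw [hb]
      intro h
      have hp : (p:ℝ) = -(n:ℝ) := by linarith
      exact hp2 (by exact_mod_cast hp)
    have hab : a + b = 2*(n:ℝ) := by rw [ha, hb]; ring
    have hcast : ((n ^ 2 - p ^ 2 : ℤ) : ℝ) = a * b := by push_cast; ring
    have hkey : 2*(n:ℝ)^2 ≤ a^2 + b^2 := by nlinarith [sq_nonneg (a - b)]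
    have h1 : (0:ℝ) < a^2*b^2 := by positivity
    rw [hcast]
    simp only [hGdef]
    calc 1/(a*b)^2 = (2*(n:ℝ)^2)/(2*(n:ℝ)^2*(a^2*b^2)) := by
          field_simp
      _ ≤ (a^2+b^2)/(2*(n:ℝ)^2*(a^2*b^2)) := by gcongr
      _ = 1/(2*(n:ℝ)^2) * (1/a^2+1/b^2) := by field_simp; ring
  have hGnonneg : ∀ p : ℤ, 0 ≤ G p := by
    intro p; simp only [hGdef]; positivity
  -- summability of the original sum
  have hFsum : Summable (fun p : {p : ℤ // p ≠ n ∧ p ≠ -n} =>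
      (1 : ℝ) / ((n ^ 2 - (p : ℤ) ^ 2 : ℤ) : ℝ) ^ 2) := by
    refine Summable.of_nonneg_of_le (fun p => by positivity) key ?_
    exact hGsum.subtype _
  -- value of the dominating sum
  have hGval : ∑' p : ℤ, G p = π^2/(3*(n:ℝ)^2) := by
    have hA : ∑' p : ℤ, 1/((n:ℝ)-p)^2 = π^2/3 := by
      rw [← hT.tsum_eq, ← (Equiv.subLeft n).tsum_eq (fun k : ℤ => 1/(k:ℝ)^2)]
      refine tsum_congr fun p => ?_
      simp only [Equiv.subLeft_apply]
      push_cast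
      ring_nf
    have hB : ∑' p : ℤ, 1/((n:ℝ)+p)^2 = π^2/3 := by
      rw [← hT.tsum_eq, ← (Equiv.addLeft n).tsum_eq (fun k : ℤ => 1/(k:ℝ)^2)]
      refine tsum_congr fun p => ?_
      simp only [Equiv.coe_addLeft]
      push_cast
      ring_nf
    simp only [hGdef]
    rw [tsum_mul_left, Summable.tsum_add hGA hGB, hA, hB]
    field_simp
    ring
  calc ∑' p : {p : ℤ // p ≠ n ∧ p ≠ -n},
        (1 : ℝ) / ((n ^ 2 - (p : ℤ) ^ 2 : ℤ) : ℝ) ^ 2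
      ≤ ∑' p : {p : ℤ // p ≠ n ∧ p ≠ -n}, G (p : ℤ) :=
        Summable.tsum_le_tsum key hFsum (hGsum.subtype _)
    _ ≤ ∑' p : ℤ, G p := Summable.tsum_subtype_le G {p : ℤ | p ≠ n ∧ p ≠ -n} hGnonneg hGsum
    _ = π^2/(3*(n:ℝ)^2) := hGval
    _ < 4 / (n:ℝ)^2 := by
        rw [div_lt_div_iff₀ (by positivity) (by positivity)]
        have hpi : π^2 < 12 := by nlinarith [Real.pi_lt_d2, Real.pi_pos]
        nlinarith [mul_pos hn0 hn0, hpi]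
end

section
/- Let r = (r(k))_{k∈ℤ} be a square-summable sequence of nonnegative reals with norm ‖r‖ = (Σ_k r(k)²)^{1/2}, and for m ∈ ℕ let E_m(r) = (Σ_{|j|≥m} r(j)²)^{1/2}. Then for every integer n with |n| ≥ 1, Σ_{k≠n} r(n+k)²/|n-k| ≤ ‖r‖²/|n| + E_{|n|}(r)². -/
theorem stmt_4 (r : ℤ → ℝ) (hr : ∀ k, 0 ≤ r k)
    (hsum : Summable (fun k => (r k) ^ 2)) (n : ℤ) (hn : 1 ≤ |n|) :
    ∑' k : {k : ℤ // k ≠ n}, (r (n + (k : ℤ))) ^ 2 / ((|n - (k : ℤ)| : ℤ) : ℝ) ≤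
      (∑' k : ℤ, (r k) ^ 2) / ((|n| : ℤ) : ℝ) +
        ∑' j : {j : ℤ // |n| ≤ |j|}, (r (j : ℤ)) ^ 2 := by
  have hn0 : (0:ℝ) < ((|n| : ℤ) : ℝ) := by exact_mod_cast lt_of_lt_of_le one_pos hn
  -- shifted sequence summable
  have hshift : Summable (fun k : ℤ => r (n + k) ^ 2) :=
    ((Equiv.addLeft n).summable_iff (f := fun k => r k ^ 2)).2 hsum
  set h : ℤ → ℝ := fun k => if |n| ≤ |n + k| then r (n + k) ^ 2 else 0 with hh
  have hhnn : ∀ k, 0 ≤ h k := by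
    intro k; simp only [hh]; split <;> positivity
  have hhsum : Summable h := by
    apply Summable.of_nonneg_of_le hhnn _ hshift
    intro k; simp only [hh]; split
    · exact le_refl _
    · positivity
  set g : ℤ → ℝ := fun k => r (n + k) ^ 2 / ((|n| : ℤ) : ℝ) + h k with hg
  have hgsum : Summable g := (hshift.div_const _).add hhsum
  have hgnn : ∀ k, 0 ≤ g k := by
    intro k
    have := hhnn k
    have : 0 ≤ r (n + k) ^ 2 / ((|n| : ℤ) : ℝ) := by positivity
    simp only [hg]; linarith [hhnn k]
  -- pointwise bound
  have hpt : ∀ k : {k : ℤ // k ≠ n},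
      r (n + (k : ℤ)) ^ 2 / ((|n - (k : ℤ)| : ℤ) : ℝ) ≤ g (k : ℤ) := by
    rintro ⟨k, hk⟩
    have hk1 : (1:ℤ) ≤ |n - k| :=
      Int.one_le_abs (sub_ne_zero.2 (Ne.symm hk))
    have hk1' : (1:ℝ) ≤ ((|n - k| : ℤ) : ℝ) := by exact_mod_cast hk1
    have hrnn : 0 ≤ r (n + k) ^ 2 := by positivity
    by_cases hc : |n| ≤ |n - k|
    · have hc' : ((|n| : ℤ) : ℝ) ≤ ((|n - k| : ℤ) : ℝ) := by exact_mod_cast hc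
      have h1 : r (n + k) ^ 2 / ((|n - k| : ℤ) : ℝ) ≤ r (n + k) ^ 2 / ((|n| : ℤ) : ℝ) :=
        div_le_div_of_nonneg_left hrnn hn0 hc'
      simp only [hg]
      have := hhnn k
      linarith
    · push_neg at hc
      have habs : |n| ≤ |n + k| := by
        have h2 : |2 * n| - |n - k| ≤ |2 * n - (n - k)| := abs_sub_abs_le_abs_sub _ _
        have h3 : 2 * n - (n - k) = n + k := by ring
        rw [h3] at h2
        have h4 : |2 * n| = 2 * |n| := by rw [abs_mul]; simp
        omega
      have h5 : r (n + k) ^ 2 / ((|n - k| : ℤ) : ℝ) ≤ r (n + k) ^ 2 := by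
        exact div_le_self hrnn hk1'
      have h6 : 0 ≤ r (n + k) ^ 2 / ((|n| : ℤ) : ℝ) := by positivity
      simp only [hg, hh, if_pos habs]
      linarith
  -- summability of LHS
  have hlsum : Summable (fun k : {k : ℤ // k ≠ n} =>
      r (n + (k : ℤ)) ^ 2 / ((|n - (k : ℤ)| : ℤ) : ℝ)) := by
    apply Summable.of_nonneg_of_le _ hpt (hgsum.subtype _)
    intro k
    have hk1 : (1:ℤ) ≤ |n - (k:ℤ)| :=
      Int.one_le_abs (sub_ne_zero.2 (Ne.symm k.2))
    have : (0:ℝ) < ((|n - (k:ℤ)| : ℤ) : ℝ) := by exact_mod_cast lt_of_lt_of_le one_pos hk1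
    positivity
  calc ∑' k : {k : ℤ // k ≠ n}, r (n + (k : ℤ)) ^ 2 / ((|n - (k : ℤ)| : ℤ) : ℝ)
      ≤ ∑' k : {k : ℤ // k ≠ n}, g (k : ℤ) :=
        Summable.tsum_le_tsum hpt hlsum (hgsum.subtype _)
    _ = (∑' k : {k : ℤ // k ≠ n}, r (n + (k : ℤ)) ^ 2 / ((|n| : ℤ) : ℝ)) +
        ∑' k : {k : ℤ // k ≠ n}, h (k : ℤ) :=
        Summable.tsum_add ((hshift.div_const _).subtype _) (hhsum.subtype _)
    _ ≤ (∑' k : ℤ, r k ^ 2) / ((|n| : ℤ) : ℝ) +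
        ∑' j : {j : ℤ // |n| ≤ |j|}, r (j : ℤ) ^ 2 := by
        apply add_le_add
        · rw [tsum_div_const]
          have hsub : ∑' k : {k : ℤ // k ≠ n}, r (n + (k:ℤ)) ^ 2 ≤ ∑' k : ℤ, r k ^ 2 := by
            have h1 : ∑' k : {k : ℤ // k ≠ n}, r (n + (k:ℤ)) ^ 2 ≤ ∑' k : ℤ, r (n + k) ^ 2 :=
              Summable.tsum_le_tsum_of_inj Subtype.val Subtype.val_injective
                (fun c _ => by positivity) (fun b => le_refl _) (hshift.subtype _) hshift
            have h2 : ∑' k : ℤ, r (n + k) ^ 2 = ∑' k : ℤ, r k ^ 2 :=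
              (Equiv.addLeft n).tsum_eq (fun k => r k ^ 2)
            linarith
          gcongr
        · have hB1 : ∑' k : {k : ℤ // k ≠ n}, h (k:ℤ) ≤ ∑' k : ℤ, h k :=
            Summable.tsum_le_tsum_of_inj Subtype.val Subtype.val_injective (fun c _ => hhnn c)
              (fun b => le_refl _) (hhsum.subtype _) hhsum
          have hB2 : ∑' k : ℤ, h k = ∑' j : ℤ, (if |n| ≤ |j| then r j ^ 2 else 0) :=
            (Equiv.addLeft n).tsum_eq (fun j => if |n| ≤ |j| then r j ^ 2 else 0)
          have hB3 : ∑' j : {j : ℤ // |n| ≤ |j|}, r (j:ℤ) ^ 2 =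
              ∑' j : ℤ, (if |n| ≤ |j| then r j ^ 2 else 0) := by
            exact (tsum_subtype {j : ℤ | |n| ≤ |j|} fun j => r j ^ 2).trans
              (tsum_congr fun j => by simp [Set.indicator_apply, Set.mem_setOf_eq])
          linarith
end

section
/- Let r = (r(k))_{k∈ℤ} ∈ ℓ²(ℤ) with nonnegative entries, norm ‖r‖, and tail norms E_m(r) = (Σ_{|j|≥m} r(j)²)^{1/2}. There is an absolute constant C such that for every integer n with |n| ≥ 1, Σ_{i≠n} Σ_{k≠n} r(i+k)²/(|n-i||n-k|) ≤ C(‖r‖²/√|n| + E_{|n|}(r)²). -/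
open ENNReal

lemma stmt5_sum_Ico_sq_aux (m : ℕ) (hm : 1 ≤ m) : ∀ M, m ≤ M →
    ∑ i ∈ Finset.Ico m M, (1 / (i:ℝ)^2) ≤ 2/(m:ℝ) - 2/(M:ℝ) := by
  intro M
  induction M with
  | zero => intro h; omega
  | succ M ih =>
    intro h
    rcases Nat.lt_or_ge m (M+1) with h1 | h2
    · have hmM : m ≤ M := by omega
      rw [Finset.sum_Ico_succ_top hmM]
      have hM1 : (1:ℝ) ≤ M := by exact_mod_cast le_trans hm hmM
      have hM0 : (0:ℝ) < M := by linarith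
      have key : 1 / (M:ℝ)^2 ≤ 2/(M:ℝ) - 2/((M:ℝ)+1) := by
        rw [div_sub_div _ _ (ne_of_gt hM0) (by positivity)]
        rw [div_le_div_iff₀ (by positivity) (by positivity)]
        nlinarith [sq_nonneg (M:ℝ)]
      have := ih hmM
      push_cast
      push_cast at this
      linarith
    · have : m = M + 1 := by omega
      subst this
      simp

lemma stmt5_nat_tail_sq (t : ℝ) (ht : 1 ≤ t) :
    ∑' i : ℕ, (if t ≤ (i:ℝ) then ENNReal.ofReal (1/(i:ℝ)^2) else 0) ≤ ENNReal.ofReal (2/t) := by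
  apply ENNReal.tsum_le_of_sum_range_le
  intro M
  have h1 : ∀ i ∈ Finset.range M, (if t ≤ (i:ℝ) then ENNReal.ofReal (1/(i:ℝ)^2) else 0)
      = ENNReal.ofReal (if t ≤ (i:ℝ) then 1/(i:ℝ)^2 else 0) := by
    intro i _; split <;> simp
  rw [Finset.sum_congr rfl h1, ← ENNReal.ofReal_sum_of_nonneg (by intro i _; positivity)]
  apply ENNReal.ofReal_le_ofReal
  set m : ℕ := ⌈t⌉₊ with hm
  have hm1 : 1 ≤ m := Nat.one_le_ceil_iff.mpr (by linarith)
  have hrw : ∑ i ∈ Finset.range M, (if t ≤ (i:ℝ) then 1/(i:ℝ)^2 else 0)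
      = ∑ i ∈ Finset.Ico m M, 1/(i:ℝ)^2 := by
    rw [Finset.range_eq_Ico, ← Finset.sum_filter]
    congr 1
    ext i
    simp only [Finset.mem_filter, Finset.mem_Ico]
    constructor
    · rintro ⟨⟨_, h2⟩, h3⟩; exact ⟨Nat.ceil_le.mpr h3, h2⟩
    · rintro ⟨h2, h3⟩; exact ⟨⟨by omega, h3⟩, Nat.ceil_le.mp h2⟩
  rw [hrw]
  rcases le_or_gt m M with h | h
  · calc ∑ i ∈ Finset.Ico m M, 1/(i:ℝ)^2 ≤ 2/(m:ℝ) - 2/(M:ℝ) := stmt5_sum_Ico_sq_aux m hm1 M h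
      _ ≤ 2/(m:ℝ) := by
        have hMpos : (0:ℝ) ≤ M := by positivity
        have : (0:ℝ) ≤ 2/(M:ℝ) := by positivity
        linarith
      _ ≤ 2/t := by
        apply div_le_div_of_nonneg_left (by norm_num) (by linarith)
        exact Nat.le_ceil t
  · rw [Finset.Ico_eq_empty (by omega)]
    simp
    positivity

lemma stmt5_int_tail_sq (t : ℝ) (ht : 1 ≤ t) :
    ∑' a : ℤ, (if t ≤ |(a:ℝ)| then ENNReal.ofReal (1/(a:ℝ)^2) else 0) ≤ ENNReal.ofReal (4/t) := by
  set f : ℤ → ℝ≥0∞ := fun a => (if t ≤ |(a:ℝ)| then ENNReal.ofReal (1/(a:ℝ)^2) else 0) with hf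
  have hsplit : ∑' a : ℤ, f a = ∑' i : ℕ, f i + ∑' i : ℕ, f (-(i+1)) :=
    tsum_of_nat_of_neg_add_one ENNReal.summable ENNReal.summable
  set h : ℕ → ℝ≥0∞ := fun i => (if t ≤ (i:ℝ) then ENNReal.ofReal (1/(i:ℝ)^2) else 0) with hh
  have h1 : ∀ i : ℕ, f (i : ℤ) = h i := by
    intro i; simp only [hf, hh]
    norm_num [abs_of_nonneg (by positivity : (0:ℝ) ≤ (i:ℝ))]
  have h2 : ∀ i : ℕ, f (-(i+1) : ℤ) = h (i+1) := by
    intro i; simp only [hf, hh]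
    have e1 : ((-(i+1) : ℤ) : ℝ) = -((i:ℝ)+1) := by push_cast; ring
    rw [e1, abs_neg, abs_of_nonneg (by positivity), neg_sq]
    norm_num
  calc ∑' a : ℤ, f a = ∑' i : ℕ, h i + ∑' i : ℕ, h (i+1) := by
        rw [hsplit]
        congr 1
        · exact tsum_congr h1
        · exact tsum_congr h2
    _ ≤ ENNReal.ofReal (2/t) + ENNReal.ofReal (2/t) := by
        gcongr
        · exact stmt5_nat_tail_sq t ht
        · exact le_trans (ENNReal.tsum_comp_le_tsum_of_injective (add_left_injective 1) h)
            (stmt5_nat_tail_sq t ht)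
    _ = ENNReal.ofReal (4/t) := by
        rw [← ENNReal.ofReal_add (by positivity) (by positivity)]
        ring_nf

lemma stmt5_int_count (s : ℝ) (hs : 1 ≤ s) :
    ∑' b : ℤ, (if |(b:ℝ)| < s then (1:ℝ≥0∞) else 0) ≤ ENNReal.ofReal (3*s) := by
  set m : ℤ := ⌊s⌋ with hm
  have hm1 : 1 ≤ m := by exact_mod_cast Int.le_floor.mpr (by norm_num [hs])
  have hvan : ∀ b ∉ Finset.Icc (-m) m, (if |(b:ℝ)| < s then (1:ℝ≥0∞) else 0) = 0 := by
    intro b hb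
    rw [if_neg]
    intro habs
    apply hb
    simp only [Finset.mem_Icc]
    have : |b| ≤ m := by
      have h1 : ((|b|:ℤ):ℝ) = |(b:ℝ)| := by push_cast; rfl
      have : |(b:ℝ)| ≤ m := by
        rw [← h1]
        exact_mod_cast Int.le_floor.mpr (by rw [h1]; linarith)
      rw [← h1] at this
      exact_mod_cast this
    rw [abs_le] at this
    exact this
  rw [tsum_eq_sum hvan]
  calc ∑ b ∈ Finset.Icc (-m) m, (if |(b:ℝ)| < s then (1:ℝ≥0∞) else 0)
      ≤ ∑ _b ∈ Finset.Icc (-m) m, (1:ℝ≥0∞) := by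
        apply Finset.sum_le_sum; intro i _; split <;> simp
    _ = ((Finset.Icc (-m) m).card : ℝ≥0∞) := by simp
    _ ≤ ENNReal.ofReal (3*s) := by
        rw [Int.card_Icc]
        have he : (m + 1 - -m).toNat = (2*m+1).toNat := by ring_nf
        rw [he]
        have h0 : (0:ℤ) ≤ 2*m+1 := by omega
        have h2 : (((2*m+1).toNat : ℕ) : ℝ) ≤ 3*s := by
          have e : (((2*m+1).toNat : ℕ) : ℝ) = 2*(m:ℝ)+1 := by
            rw [show (((2*m+1).toNat : ℕ) : ℝ) = ((((2*m+1).toNat : ℕ) : ℤ) : ℝ) by push_cast; ring,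
              Int.toNat_of_nonneg h0]
            push_cast; ring
          rw [e]
          have := Int.floor_le s
          linarith
        calc (((2*m+1).toNat : ℕ) : ℝ≥0∞) = ENNReal.ofReal (((2*m+1).toNat : ℕ) : ℝ) := by
              rw [ENNReal.ofReal_natCast]
          _ ≤ ENNReal.ofReal (3*s) := ENNReal.ofReal_le_ofReal h2

lemma stmt5_amgm_div (x α β : ℝ) (hx : 0 ≤ x) : x / (|α| * |β|) ≤ x/α^2 + x/β^2 := by
  rcases eq_or_ne α 0 with h | hα
  · rw [h, abs_zero, zero_mul, _root_.div_zero]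
    positivity
  rcases eq_or_ne β 0 with h | hβ
  · rw [h, abs_zero, mul_zero, _root_.div_zero]
    positivity
  have ha : 0 < |α| := abs_pos.mpr hα
  have hb : 0 < |β| := abs_pos.mpr hβ
  have key : 1/(abs α * abs β) ≤ 1/α^2 + 1/β^2 := by
    rw [div_add_div _ _ (by positivity) (by positivity),
      div_le_div_iff₀ (by positivity) (by positivity)]
    have e1 : α^2 = (abs α)^2 := (sq_abs α).symm
    have e2 : β^2 = (abs β)^2 := (sq_abs β).symm
    rw [e1, e2]
    nlinarith [sq_nonneg (abs α - abs β), sq_nonneg (abs α * abs β), mul_pos ha hb]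
  calc x / (abs α * abs β) = x * (1/(abs α * abs β)) := by ring
    _ ≤ x * (1/α^2 + 1/β^2) := mul_le_mul_of_nonneg_left key hx
    _ = x/α^2 + x/β^2 := by ring

lemma stmt5_small_case (x A B N : ℝ) (hx : 0 ≤ x) (hN : 0 < N) (h1 : 1 ≤ B) (h2 : N/2 ≤ A) :
    x / (A * B) ≤ x * (2/N) := by
  have hA : 0 < A := lt_of_lt_of_le (by linarith) h2
  have hB : 0 < B := lt_of_lt_of_le one_pos h1
  have hAB : N/2 ≤ A * B := by nlinarith
  calc x / (A * B) ≤ x / (N/2) := by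
        apply div_le_div_of_nonneg_left hx (by linarith) hAB
    _ = x * (2/N) := by field_simp
  
lemma stmt5_convert {α β : Type*} (f : α → β → ℝ) (hf : ∀ a b, 0 ≤ f a b) (c : ℝ)
    (hc : 0 ≤ c)
    (h : ∑' a, ∑' b, ENNReal.ofReal (f a b) ≤ ENNReal.ofReal c) :
    ∑' a, ∑' b, f a b ≤ c := by
  set A : α → ℝ≥0∞ := fun a => ∑' b, ENNReal.ofReal (f a b) with hA
  have hAtop : ∀ a, A a ≠ ∞ :=
    fun a => ne_top_of_le_ne_top ENNReal.ofReal_ne_top (le_trans (ENNReal.le_tsum a) h)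
  have hsumf : ∀ a, Summable (f a) := by
    intro a
    exact (ENNReal.summable_toReal (hAtop a)).congr
      (fun b => ENNReal.toReal_ofReal (hf a b))
  have hinner : ∀ a, ∑' b, f a b = (A a).toReal := by
    intro a
    show ∑' b, f a b = (∑' b, ENNReal.ofReal (f a b)).toReal
    rw [← ENNReal.ofReal_tsum_of_nonneg (hf a) (hsumf a), ENNReal.toReal_ofReal (tsum_nonneg (hf a))]
  calc ∑' a, ∑' b, f a b = ∑' a, (A a).toReal := tsum_congr hinner
    _ = (∑' a, A a).toReal := (ENNReal.tsum_toReal_eq hAtop).symm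
    _ ≤ (ENNReal.ofReal c).toReal := ENNReal.toReal_mono ENNReal.ofReal_ne_top h
    _ = c := ENNReal.toReal_ofReal hc

theorem stmt_5 :
    ∃ C : ℝ, 0 < C ∧ ∀ (r : ℤ → ℝ), (∀ k, 0 ≤ r k) →
      Summable (fun k => (r k) ^ 2) → ∀ n : ℤ, 1 ≤ |n| →
      ∑' i : {i : ℤ // i ≠ n}, ∑' k : {k : ℤ // k ≠ n},
          (r ((i : ℤ) + (k : ℤ))) ^ 2 /
            (((|n - (i : ℤ)| : ℤ) : ℝ) * ((|n - (k : ℤ)| : ℤ) : ℝ)) ≤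
        C * ((∑' k : ℤ, (r k) ^ 2) / Real.sqrt ((|n| : ℤ) : ℝ) +
          ∑' j : {j : ℤ // |n| ≤ |j|}, (r (j : ℤ)) ^ 2) := by
  refine ⟨100, by norm_num, ?_⟩
  intro r hr hsum n hn
  -- basic real quantities
  set N : ℝ := ((|n| : ℤ) : ℝ) with hNdef
  have hN1 : (1:ℝ) ≤ N := by rw [hNdef]; exact_mod_cast hn
  have hN0 : (0:ℝ) < N := by linarith
  set s : ℝ := Real.sqrt N with hsdef
  have hs1 : (1:ℝ) ≤ s := by
    rw [hsdef, show (1:ℝ) = Real.sqrt 1 by simp]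
    exact Real.sqrt_le_sqrt hN1
  have hs0 : (0:ℝ) < s := lt_of_lt_of_le one_pos hs1
  have hss : s * s = N := Real.mul_self_sqrt (by linarith)
  set Rr : ℝ := ∑' k : ℤ, (r k)^2 with hRrdef
  set Er : ℝ := ∑' j : {j : ℤ // |n| ≤ |j|}, (r (j:ℤ))^2 with hErdef
  have hRr0 : 0 ≤ Rr := tsum_nonneg (fun k => sq_nonneg _)
  have hEr0 : 0 ≤ Er := tsum_nonneg (fun k => sq_nonneg _)
  set B : ℝ := 100 * (Rr / s + Er) with hBdef
  have hB0 : 0 ≤ B := by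
    have : 0 ≤ Rr / s := div_nonneg hRr0 hs0.le
    rw [hBdef]; nlinarith
  -- the real summand over all of ℤ × ℤ
  set t : ℤ → ℤ → ℝ := fun i k =>
    (r (i + k))^2 / (((|n - i| : ℤ) : ℝ) * ((|n - k| : ℤ) : ℝ)) with htdef
  have ht0 : ∀ i k, 0 ≤ t i k := by
    intro i k
    apply div_nonneg (sq_nonneg _)
    apply mul_nonneg
    · exact_mod_cast abs_nonneg (n - i)
    · exact_mod_cast abs_nonneg (n - k)
  have htn : ∀ i, t i n = 0 := by
    intro i; simp [htdef]
  have htn' : ∀ k, t n k = 0 := by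
    intro k; simp [htdef]
  -- explicit form after change of variables
  have htF : ∀ a b : ℤ, t (n-a) (n-b)
      = (r (2*n - a - b))^2 / (|((a:ℤ):ℝ)| * |((b:ℤ):ℝ)|) := by
    intro a b
    simp only [htdef]
    rw [show n - a + (n - b) = 2*n - a - b by ring,
      show n - (n - a) = a by ring, show n - (n - b) = b by ring]
    congr 1
    · push_cast [Int.cast_abs]; ring
  -- ENNReal versions of the ℓ² norms
  set g : ℤ → ℝ≥0∞ := fun j => ENNReal.ofReal ((r j)^2) with hgdef
  have hR : ∑' j : ℤ, g j = ENNReal.ofReal Rr :=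
    (ENNReal.ofReal_tsum_of_nonneg (fun k => sq_nonneg _) hsum).symm
  have hEsub : Summable (fun j : {j : ℤ // |n| ≤ |j|} => (r (j:ℤ))^2) := hsum.subtype _
  have hE : ∑' j : ℤ, (if |n| ≤ |j| then g j else 0) = ENNReal.ofReal Er := by
    have h1 : ENNReal.ofReal Er = ∑' j : {j : ℤ // |n| ≤ |j|}, g (j:ℤ) := by
      rw [hErdef, ENNReal.ofReal_tsum_of_nonneg (fun k => sq_nonneg _) hEsub]
    have h2 : ∑' j : {j : ℤ // |n| ≤ |j|}, g (j:ℤ)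
        = ∑' j : ℤ, Set.indicator {j : ℤ | |n| ≤ |j|} g j :=
      tsum_subtype {j : ℤ | |n| ≤ |j|} g
    rw [h1, h2]
    apply tsum_congr
    intro j
    rw [Set.indicator_apply]
    rfl
  -- main ENNReal bound
  have hmain : ∑' a : ℤ, ∑' b : ℤ, ENNReal.ofReal (t (n-a) (n-b)) ≤ ENNReal.ofReal B := by
    -- generic reindexed sum bounds
    have hsum_g : ∀ c : ℤ, ∑' b : ℤ, g (c - b) ≤ ENNReal.ofReal Rr := by
      intro c
      exact le_of_le_of_eq (ENNReal.tsum_comp_le_tsum_of_injective sub_right_injective g) hR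
    have hsum_g' : ∀ b : ℤ, ∑' a : ℤ, g (2*n - a - b) ≤ ENNReal.ofReal Rr := by
      intro b
      have hc : ∀ a : ℤ, g (2*n - a - b) = g (2*n - b - a) := by
        intro a; congr 1; ring
      rw [tsum_congr hc]
      exact hsum_g (2*n - b)
    have hsum_gE : ∀ c : ℤ, ∑' b : ℤ, (if |n| ≤ |c - b| then g (c - b) else 0)
        ≤ ENNReal.ofReal Er :=
      fun c => le_of_le_of_eq (ENNReal.tsum_comp_le_tsum_of_injective sub_right_injective
        (fun j => if |n| ≤ |j| then g j else 0)) hE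
    have hsum_gE' : ∀ b : ℤ, ∑' a : ℤ, (if |n| ≤ |2*n - a - b| then g (2*n - a - b) else 0)
        ≤ ENNReal.ofReal Er := by
      intro b
      have hc : ∀ a : ℤ, (if |n| ≤ |2*n - a - b| then g (2*n - a - b) else 0)
          = (if |n| ≤ |2*n - b - a| then g (2*n - b - a) else 0) := by
        intro a; rw [show 2*n - a - b = 2*n - b - a by ring]
      rw [tsum_congr hc]
      exact hsum_gE (2*n - b)
    have hsum_u : ∑' a : ℤ, ENNReal.ofReal (1/((a:ℤ):ℝ)^2) ≤ ENNReal.ofReal 4 := by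
      have hcong : ∀ a : ℤ, ENNReal.ofReal (1/((a:ℤ):ℝ)^2)
          = (if (1:ℝ) ≤ |((a:ℤ):ℝ)| then ENNReal.ofReal (1/((a:ℤ):ℝ)^2) else 0) := by
        intro a
        by_cases ha : a = 0
        · subst ha; norm_num
        · rw [if_pos]
          have h1 : (1:ℤ) ≤ |a| := Int.one_le_abs ha
          calc (1:ℝ) ≤ ((|a|:ℤ):ℝ) := by exact_mod_cast h1
            _ = |((a:ℤ):ℝ)| := by push_cast; rfl
      rw [tsum_congr hcong]
      simpa using stmt5_int_tail_sq 1 le_rfl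
    have hsum_us : ∑' a : ℤ, (if s ≤ |((a:ℤ):ℝ)| then ENNReal.ofReal (1/((a:ℤ):ℝ)^2) else 0)
        ≤ ENNReal.ofReal (4/s) := stmt5_int_tail_sq s hs1
    have hcnt : ∑' b : ℤ, (if |((b:ℤ):ℝ)| < s then (1:ℝ≥0∞) else 0) ≤ ENNReal.ofReal (3*s) :=
      stmt5_int_count s hs1
    -- the two basic pointwise AM-GM forms
    have hkey1 : ∀ a b : ℤ, ENNReal.ofReal (t (n-a) (n-b)) ≤
        g (2*n-a-b) * ENNReal.ofReal (1/((a:ℤ):ℝ)^2)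
        + g (2*n-a-b) * ENNReal.ofReal (1/((b:ℤ):ℝ)^2) := by
      intro a b
      rw [htF]
      calc ENNReal.ofReal ((r (2*n-a-b))^2 / (|((a:ℤ):ℝ)| * |((b:ℤ):ℝ)|))
          ≤ ENNReal.ofReal ((r (2*n-a-b))^2/((a:ℤ):ℝ)^2 + (r (2*n-a-b))^2/((b:ℤ):ℝ)^2) :=
            ENNReal.ofReal_le_ofReal (stmt5_amgm_div _ _ _ (sq_nonneg _))
        _ = ENNReal.ofReal ((r (2*n-a-b))^2/((a:ℤ):ℝ)^2)
            + ENNReal.ofReal ((r (2*n-a-b))^2/((b:ℤ):ℝ)^2) :=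
            ENNReal.ofReal_add (by positivity) (by positivity)
        _ = _ := by
            simp only [hgdef]
            rw [← ENNReal.ofReal_mul (sq_nonneg _), ← ENNReal.ofReal_mul (sq_nonneg _)]
            rw [mul_one_div, mul_one_div]
    have hkey2 : ∀ a b : ℤ, ENNReal.ofReal (t (n-a) (n-b)) ≤
        ENNReal.ofReal (1/((a:ℤ):ℝ)^2) * g (2*n-a-b)
        + ENNReal.ofReal (1/((b:ℤ):ℝ)^2) * g (2*n-a-b) := by
      intro a b
      refine le_trans (hkey1 a b) (le_of_eq ?_)
      rw [mul_comm (g (2*n-a-b)), mul_comm (g (2*n-a-b))]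
    rcases lt_or_ge N 4 with hN4 | hN4
    · -- small n : bound the whole sum by 8 ‖r‖²
      calc ∑' a : ℤ, ∑' b : ℤ, ENNReal.ofReal (t (n-a) (n-b))
          ≤ ∑' a : ℤ, ∑' b : ℤ, (g (2*n-a-b) * ENNReal.ofReal (1/((a:ℤ):ℝ)^2)
              + g (2*n-a-b) * ENNReal.ofReal (1/((b:ℤ):ℝ)^2)) :=
            ENNReal.tsum_le_tsum (fun a => ENNReal.tsum_le_tsum (fun b => hkey1 a b))
        _ = (∑' a : ℤ, ∑' b : ℤ, g (2*n-a-b) * ENNReal.ofReal (1/((a:ℤ):ℝ)^2))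
            + ∑' a : ℤ, ∑' b : ℤ, g (2*n-a-b) * ENNReal.ofReal (1/((b:ℤ):ℝ)^2) := by
            simp only [ENNReal.tsum_add]
        _ ≤ ENNReal.ofReal Rr * ENNReal.ofReal 4 + ENNReal.ofReal 4 * ENNReal.ofReal Rr := by
            apply add_le_add
            · calc ∑' a : ℤ, ∑' b : ℤ, g (2*n-a-b) * ENNReal.ofReal (1/((a:ℤ):ℝ)^2)
                  = ∑' a : ℤ, (∑' b : ℤ, g (2*n-a-b)) * ENNReal.ofReal (1/((a:ℤ):ℝ)^2) :=
                    tsum_congr (fun a => ENNReal.tsum_mul_right)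
                _ ≤ ∑' a : ℤ, ENNReal.ofReal Rr * ENNReal.ofReal (1/((a:ℤ):ℝ)^2) :=
                    ENNReal.tsum_le_tsum (fun a => mul_le_mul_left (hsum_g (2*n-a)) _)
                _ = ENNReal.ofReal Rr * ∑' a : ℤ, ENNReal.ofReal (1/((a:ℤ):ℝ)^2) :=
                    ENNReal.tsum_mul_left
                _ ≤ ENNReal.ofReal Rr * ENNReal.ofReal 4 := mul_le_mul_right hsum_u _
            · calc ∑' a : ℤ, ∑' b : ℤ, g (2*n-a-b) * ENNReal.ofReal (1/((b:ℤ):ℝ)^2)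
                  = ∑' b : ℤ, ∑' a : ℤ, g (2*n-a-b) * ENNReal.ofReal (1/((b:ℤ):ℝ)^2) :=
                    ENNReal.tsum_comm
                _ = ∑' b : ℤ, (∑' a : ℤ, g (2*n-a-b)) * ENNReal.ofReal (1/((b:ℤ):ℝ)^2) :=
                    tsum_congr (fun b => ENNReal.tsum_mul_right)
                _ ≤ ∑' b : ℤ, ENNReal.ofReal Rr * ENNReal.ofReal (1/((b:ℤ):ℝ)^2) :=
                    ENNReal.tsum_le_tsum (fun b => mul_le_mul_left (hsum_g' b) _)
                _ = ENNReal.ofReal Rr * ∑' b : ℤ, ENNReal.ofReal (1/((b:ℤ):ℝ)^2) :=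
                    ENNReal.tsum_mul_left
                _ ≤ ENNReal.ofReal Rr * ENNReal.ofReal 4 := mul_le_mul_right hsum_u _
                _ = ENNReal.ofReal 4 * ENNReal.ofReal Rr := mul_comm _ _
        _ ≤ ENNReal.ofReal B := by
            rw [← ENNReal.ofReal_mul hRr0, ← ENNReal.ofReal_mul (by norm_num : (0:ℝ) ≤ 4),
              ← ENNReal.ofReal_add (mul_nonneg hRr0 (by norm_num)) (mul_nonneg (by norm_num) hRr0)]
            apply ENNReal.ofReal_le_ofReal
            have hs2 : s ≤ 2 := by nlinarith
            have hdiv : Rr / 2 ≤ Rr / s := div_le_div_of_nonneg_left hRr0 hs0 hs2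
            rw [hBdef]
            linarith [hEr0]
    · -- large n
      have hs2 : (2:ℝ) ≤ s := by
        rw [hsdef]
        calc (2:ℝ) = Real.sqrt (2^2) := (Real.sqrt_sq (by norm_num)).symm
          _ ≤ Real.sqrt N := Real.sqrt_le_sqrt (by norm_num; linarith)
      have hsN2 : s ≤ N/2 := by nlinarith [mul_nonneg (by linarith : (0:ℝ) ≤ s - 2) hs0.le]
      -- pointwise domination
      have hpt : ∀ a b : ℤ, ENNReal.ofReal (t (n-a) (n-b)) ≤
          (if |n| ≤ |2*n-a-b| then g (2*n-a-b) * ENNReal.ofReal (1/((a:ℤ):ℝ)^2)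
              + g (2*n-a-b) * ENNReal.ofReal (1/((b:ℤ):ℝ)^2) else 0)
          + ((if s ≤ |((a:ℤ):ℝ)| then ENNReal.ofReal (1/((a:ℤ):ℝ)^2) else 0) * g (2*n-a-b)
             + (if s ≤ |((b:ℤ):ℝ)| then ENNReal.ofReal (1/((b:ℤ):ℝ)^2) else 0) * g (2*n-a-b))
          + ((if |((b:ℤ):ℝ)| < s then (1:ℝ≥0∞) else 0)
                * (ENNReal.ofReal (2/N) * g (2*n-a-b))
             + (if |((a:ℤ):ℝ)| < s then (1:ℝ≥0∞) else 0)
                * (ENNReal.ofReal (2/N) * g (2*n-a-b))) := by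
        intro a b
        by_cases h1 : |n| ≤ |2*n - a - b|
        · rw [if_pos h1]
          exact (hkey1 a b).trans (le_trans le_self_add le_self_add)
        · have hjr : |((2*n - a - b : ℤ):ℝ)| < N := by
            have hlt : |2*n-a-b| < |n| := lt_of_not_ge h1
            rw [hNdef]
            calc |((2*n - a - b : ℤ):ℝ)| = ((|2*n-a-b| : ℤ):ℝ) := by push_cast; rfl
              _ < ((|n| : ℤ):ℝ) := by exact_mod_cast hlt
          have habs2n : (2:ℝ)*N - |((2*n-a-b:ℤ):ℝ)| ≤ |((a:ℤ):ℝ)| + |((b:ℤ):ℝ)| := by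
            have e : ((a:ℤ):ℝ) + ((b:ℤ):ℝ) = 2*((n:ℤ):ℝ) - ((2*n-a-b:ℤ):ℝ) := by
              push_cast; ring
            have h2n : |2*((n:ℤ):ℝ)| = 2*N := by
              rw [abs_mul, hNdef]
              push_cast [Int.cast_abs]
              norm_num
            calc (2:ℝ)*N - |((2*n-a-b:ℤ):ℝ)|
                = |2*((n:ℤ):ℝ)| - |((2*n-a-b:ℤ):ℝ)| := by rw [h2n]
              _ ≤ |2*((n:ℤ):ℝ) - ((2*n-a-b:ℤ):ℝ)| := abs_sub_abs_le_abs_sub _ _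
              _ = |((a:ℤ):ℝ) + ((b:ℤ):ℝ)| := by rw [← e]
              _ ≤ |((a:ℤ):ℝ)| + |((b:ℤ):ℝ)| := abs_add_le _ _
          by_cases h2 : s ≤ |((a:ℤ):ℝ)| ∧ s ≤ |((b:ℤ):ℝ)|
          · rw [if_pos h2.1, if_pos h2.2]
            exact (hkey2 a b).trans (le_add_self.trans le_self_add)
          · by_cases h3 : |((b:ℤ):ℝ)| < s
            · rw [if_pos h3]
              have hXb : ENNReal.ofReal (t (n-a) (n-b))
                  ≤ ENNReal.ofReal (2/N) * g (2*n-a-b) := by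
                rw [htF]
                rcases eq_or_ne b 0 with hb | hb
                · subst hb
                  simp
                · have hβ1 : (1:ℝ) ≤ |((b:ℤ):ℝ)| := by
                    have := Int.one_le_abs hb
                    calc (1:ℝ) ≤ ((|b|:ℤ):ℝ) := by exact_mod_cast this
                      _ = |((b:ℤ):ℝ)| := by push_cast; rfl
                  have hα : N/2 ≤ |((a:ℤ):ℝ)| := by linarith
                  calc ENNReal.ofReal ((r (2*n-a-b))^2 / (|((a:ℤ):ℝ)| * |((b:ℤ):ℝ)|))
                      ≤ ENNReal.ofReal ((r (2*n-a-b))^2 * (2/N)) :=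
                        ENNReal.ofReal_le_ofReal
                          (stmt5_small_case _ _ _ N (sq_nonneg _) hN0 hβ1 hα)
                    _ = ENNReal.ofReal (2/N) * g (2*n-a-b) := by
                        simp only [hgdef]
                        rw [← ENNReal.ofReal_mul (by positivity : (0:ℝ) ≤ 2/N)]
                        congr 1
                        ring
              refine hXb.trans ?_
              refine le_trans (le_of_eq (one_mul _).symm) ?_
              exact le_self_add.trans le_add_self
            · have hbs : s ≤ |((b:ℤ):ℝ)| := not_lt.mp h3
              have has : |((a:ℤ):ℝ)| < s := by
                by_contra hc
                exact h2 ⟨not_lt.mp hc, hbs⟩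
              rw [if_pos has]
              have hXa : ENNReal.ofReal (t (n-a) (n-b))
                  ≤ ENNReal.ofReal (2/N) * g (2*n-a-b) := by
                rw [htF]
                rcases eq_or_ne a 0 with ha | ha
                · subst ha
                  simp
                · have hα1 : (1:ℝ) ≤ |((a:ℤ):ℝ)| := by
                    have := Int.one_le_abs ha
                    calc (1:ℝ) ≤ ((|a|:ℤ):ℝ) := by exact_mod_cast this
                      _ = |((a:ℤ):ℝ)| := by push_cast; rfl
                  have hβ : N/2 ≤ |((b:ℤ):ℝ)| := by linarith
                  calc ENNReal.ofReal ((r (2*n-a-b))^2 / (|((a:ℤ):ℝ)| * |((b:ℤ):ℝ)|))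
                      = ENNReal.ofReal ((r (2*n-a-b))^2 / (|((b:ℤ):ℝ)| * |((a:ℤ):ℝ)|)) := by
                        rw [mul_comm (|((a:ℤ):ℝ)|) (|((b:ℤ):ℝ)|)]
                    _ ≤ ENNReal.ofReal ((r (2*n-a-b))^2 * (2/N)) :=
                        ENNReal.ofReal_le_ofReal
                          (stmt5_small_case _ _ _ N (sq_nonneg _) hN0 hα1 hβ)
                    _ = ENNReal.ofReal (2/N) * g (2*n-a-b) := by
                        simp only [hgdef]
                        rw [← ENNReal.ofReal_mul (by positivity : (0:ℝ) ≤ 2/N)]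
                        congr 1
                        ring
              refine hXa.trans ?_
              refine le_trans (le_of_eq (one_mul _).symm) ?_
              exact le_add_self.trans le_add_self
      -- sum up the four families
      have hB1 : ∑' a : ℤ, ∑' b : ℤ,
          (if |n| ≤ |2*n-a-b| then g (2*n-a-b) * ENNReal.ofReal (1/((a:ℤ):ℝ)^2)
              + g (2*n-a-b) * ENNReal.ofReal (1/((b:ℤ):ℝ)^2) else 0)
          ≤ ENNReal.ofReal Er * ENNReal.ofReal 4 + ENNReal.ofReal Er * ENNReal.ofReal 4 := by
        have hsplit : ∀ a b : ℤ,
            (if |n| ≤ |2*n-a-b| then g (2*n-a-b) * ENNReal.ofReal (1/((a:ℤ):ℝ)^2)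
              + g (2*n-a-b) * ENNReal.ofReal (1/((b:ℤ):ℝ)^2) else 0)
            = (if |n| ≤ |2*n-a-b| then g (2*n-a-b) else 0) * ENNReal.ofReal (1/((a:ℤ):ℝ)^2)
              + (if |n| ≤ |2*n-a-b| then g (2*n-a-b) else 0) * ENNReal.ofReal (1/((b:ℤ):ℝ)^2) := by
          intro a b; split <;> simp
        calc ∑' a : ℤ, ∑' b : ℤ,
            (if |n| ≤ |2*n-a-b| then g (2*n-a-b) * ENNReal.ofReal (1/((a:ℤ):ℝ)^2)
              + g (2*n-a-b) * ENNReal.ofReal (1/((b:ℤ):ℝ)^2) else 0)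
            = (∑' a : ℤ, ∑' b : ℤ,
                (if |n| ≤ |2*n-a-b| then g (2*n-a-b) else 0) * ENNReal.ofReal (1/((a:ℤ):ℝ)^2))
              + ∑' a : ℤ, ∑' b : ℤ,
                (if |n| ≤ |2*n-a-b| then g (2*n-a-b) else 0) * ENNReal.ofReal (1/((b:ℤ):ℝ)^2) := by
              rw [tsum_congr (fun a => tsum_congr (fun b => hsplit a b))]
              simp only [ENNReal.tsum_add]
          _ ≤ ENNReal.ofReal Er * ENNReal.ofReal 4 + ENNReal.ofReal Er * ENNReal.ofReal 4 := by
              apply add_le_add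
              · calc ∑' a : ℤ, ∑' b : ℤ,
                    (if |n| ≤ |2*n-a-b| then g (2*n-a-b) else 0) * ENNReal.ofReal (1/((a:ℤ):ℝ)^2)
                    = ∑' a : ℤ, (∑' b : ℤ, (if |n| ≤ |2*n-a-b| then g (2*n-a-b) else 0))
                        * ENNReal.ofReal (1/((a:ℤ):ℝ)^2) :=
                      tsum_congr (fun a => ENNReal.tsum_mul_right)
                  _ ≤ ∑' a : ℤ, ENNReal.ofReal Er * ENNReal.ofReal (1/((a:ℤ):ℝ)^2) :=
                      ENNReal.tsum_le_tsum (fun a => mul_le_mul_left (hsum_gE (2*n-a)) _)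
                  _ = ENNReal.ofReal Er * ∑' a : ℤ, ENNReal.ofReal (1/((a:ℤ):ℝ)^2) :=
                      ENNReal.tsum_mul_left
                  _ ≤ ENNReal.ofReal Er * ENNReal.ofReal 4 := mul_le_mul_right hsum_u _
              · calc ∑' a : ℤ, ∑' b : ℤ,
                    (if |n| ≤ |2*n-a-b| then g (2*n-a-b) else 0) * ENNReal.ofReal (1/((b:ℤ):ℝ)^2)
                    = ∑' b : ℤ, ∑' a : ℤ,
                      (if |n| ≤ |2*n-a-b| then g (2*n-a-b) else 0) * ENNReal.ofReal (1/((b:ℤ):ℝ)^2) :=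
                      ENNReal.tsum_comm
                  _ = ∑' b : ℤ, (∑' a : ℤ, (if |n| ≤ |2*n-a-b| then g (2*n-a-b) else 0))
                        * ENNReal.ofReal (1/((b:ℤ):ℝ)^2) :=
                      tsum_congr (fun b => ENNReal.tsum_mul_right)
                  _ ≤ ∑' b : ℤ, ENNReal.ofReal Er * ENNReal.ofReal (1/((b:ℤ):ℝ)^2) :=
                      ENNReal.tsum_le_tsum (fun b => mul_le_mul_left (hsum_gE' b) _)
                  _ = ENNReal.ofReal Er * ∑' b : ℤ, ENNReal.ofReal (1/((b:ℤ):ℝ)^2) :=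
                      ENNReal.tsum_mul_left
                  _ ≤ ENNReal.ofReal Er * ENNReal.ofReal 4 := mul_le_mul_right hsum_u _
      have hB2a : ∑' a : ℤ, ∑' b : ℤ,
          (if s ≤ |((a:ℤ):ℝ)| then ENNReal.ofReal (1/((a:ℤ):ℝ)^2) else 0) * g (2*n-a-b)
          ≤ ENNReal.ofReal (4/s) * ENNReal.ofReal Rr := by
        calc ∑' a : ℤ, ∑' b : ℤ,
            (if s ≤ |((a:ℤ):ℝ)| then ENNReal.ofReal (1/((a:ℤ):ℝ)^2) else 0) * g (2*n-a-b)
            = ∑' a : ℤ, (if s ≤ |((a:ℤ):ℝ)| then ENNReal.ofReal (1/((a:ℤ):ℝ)^2) else 0)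
                * ∑' b : ℤ, g (2*n-a-b) :=
              tsum_congr (fun a => ENNReal.tsum_mul_left)
          _ ≤ ∑' a : ℤ, (if s ≤ |((a:ℤ):ℝ)| then ENNReal.ofReal (1/((a:ℤ):ℝ)^2) else 0)
                * ENNReal.ofReal Rr :=
              ENNReal.tsum_le_tsum (fun a => mul_le_mul_right (hsum_g (2*n-a)) _)
          _ = (∑' a : ℤ, (if s ≤ |((a:ℤ):ℝ)| then ENNReal.ofReal (1/((a:ℤ):ℝ)^2) else 0))
                * ENNReal.ofReal Rr := ENNReal.tsum_mul_right
          _ ≤ ENNReal.ofReal (4/s) * ENNReal.ofReal Rr := mul_le_mul_left hsum_us _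
      have hB2b : ∑' a : ℤ, ∑' b : ℤ,
          (if s ≤ |((b:ℤ):ℝ)| then ENNReal.ofReal (1/((b:ℤ):ℝ)^2) else 0) * g (2*n-a-b)
          ≤ ENNReal.ofReal (4/s) * ENNReal.ofReal Rr := by
        calc ∑' a : ℤ, ∑' b : ℤ,
            (if s ≤ |((b:ℤ):ℝ)| then ENNReal.ofReal (1/((b:ℤ):ℝ)^2) else 0) * g (2*n-a-b)
            = ∑' b : ℤ, ∑' a : ℤ,
              (if s ≤ |((b:ℤ):ℝ)| then ENNReal.ofReal (1/((b:ℤ):ℝ)^2) else 0) * g (2*n-a-b) :=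
              ENNReal.tsum_comm
          _ = ∑' b : ℤ, (if s ≤ |((b:ℤ):ℝ)| then ENNReal.ofReal (1/((b:ℤ):ℝ)^2) else 0)
                * ∑' a : ℤ, g (2*n-a-b) :=
              tsum_congr (fun b => ENNReal.tsum_mul_left)
          _ ≤ ∑' b : ℤ, (if s ≤ |((b:ℤ):ℝ)| then ENNReal.ofReal (1/((b:ℤ):ℝ)^2) else 0)
                * ENNReal.ofReal Rr :=
              ENNReal.tsum_le_tsum (fun b => mul_le_mul_right (hsum_g' b) _)
          _ = (∑' b : ℤ, (if s ≤ |((b:ℤ):ℝ)| then ENNReal.ofReal (1/((b:ℤ):ℝ)^2) else 0))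
                * ENNReal.ofReal Rr := ENNReal.tsum_mul_right
          _ ≤ ENNReal.ofReal (4/s) * ENNReal.ofReal Rr := mul_le_mul_left hsum_us _
      have hB3a : ∑' a : ℤ, ∑' b : ℤ,
          (if |((b:ℤ):ℝ)| < s then (1:ℝ≥0∞) else 0) * (ENNReal.ofReal (2/N) * g (2*n-a-b))
          ≤ ENNReal.ofReal (3*s) * (ENNReal.ofReal (2/N) * ENNReal.ofReal Rr) := by
        calc ∑' a : ℤ, ∑' b : ℤ,
            (if |((b:ℤ):ℝ)| < s then (1:ℝ≥0∞) else 0) * (ENNReal.ofReal (2/N) * g (2*n-a-b))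
            = ∑' b : ℤ, ∑' a : ℤ,
              (if |((b:ℤ):ℝ)| < s then (1:ℝ≥0∞) else 0) * (ENNReal.ofReal (2/N) * g (2*n-a-b)) :=
              ENNReal.tsum_comm
          _ = ∑' b : ℤ, (if |((b:ℤ):ℝ)| < s then (1:ℝ≥0∞) else 0)
                * (ENNReal.ofReal (2/N) * ∑' a : ℤ, g (2*n-a-b)) := by
              apply tsum_congr
              intro b
              rw [ENNReal.tsum_mul_left, ENNReal.tsum_mul_left]
          _ ≤ ∑' b : ℤ, (if |((b:ℤ):ℝ)| < s then (1:ℝ≥0∞) else 0)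
                * (ENNReal.ofReal (2/N) * ENNReal.ofReal Rr) :=
              ENNReal.tsum_le_tsum
                (fun b => mul_le_mul_right (mul_le_mul_right (hsum_g' b) _) _)
          _ = (∑' b : ℤ, (if |((b:ℤ):ℝ)| < s then (1:ℝ≥0∞) else 0))
                * (ENNReal.ofReal (2/N) * ENNReal.ofReal Rr) := ENNReal.tsum_mul_right
          _ ≤ ENNReal.ofReal (3*s) * (ENNReal.ofReal (2/N) * ENNReal.ofReal Rr) :=
              mul_le_mul_left hcnt _
      have hB3b : ∑' a : ℤ, ∑' b : ℤ,
          (if |((a:ℤ):ℝ)| < s then (1:ℝ≥0∞) else 0) * (ENNReal.ofReal (2/N) * g (2*n-a-b))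
          ≤ ENNReal.ofReal (3*s) * (ENNReal.ofReal (2/N) * ENNReal.ofReal Rr) := by
        calc ∑' a : ℤ, ∑' b : ℤ,
            (if |((a:ℤ):ℝ)| < s then (1:ℝ≥0∞) else 0) * (ENNReal.ofReal (2/N) * g (2*n-a-b))
            = ∑' a : ℤ, (if |((a:ℤ):ℝ)| < s then (1:ℝ≥0∞) else 0)
                * (ENNReal.ofReal (2/N) * ∑' b : ℤ, g (2*n-a-b)) := by
              apply tsum_congr
              intro a
              rw [ENNReal.tsum_mul_left, ENNReal.tsum_mul_left]
          _ ≤ ∑' a : ℤ, (if |((a:ℤ):ℝ)| < s then (1:ℝ≥0∞) else 0)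
                * (ENNReal.ofReal (2/N) * ENNReal.ofReal Rr) :=
              ENNReal.tsum_le_tsum
                (fun a => mul_le_mul_right (mul_le_mul_right (hsum_g (2*n-a)) _) _)
          _ = (∑' a : ℤ, (if |((a:ℤ):ℝ)| < s then (1:ℝ≥0∞) else 0))
                * (ENNReal.ofReal (2/N) * ENNReal.ofReal Rr) := ENNReal.tsum_mul_right
          _ ≤ ENNReal.ofReal (3*s) * (ENNReal.ofReal (2/N) * ENNReal.ofReal Rr) :=
              mul_le_mul_left hcnt _
      -- combine
      calc ∑' a : ℤ, ∑' b : ℤ, ENNReal.ofReal (t (n-a) (n-b))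
          ≤ ∑' a : ℤ, ∑' b : ℤ,
            ((if |n| ≤ |2*n-a-b| then g (2*n-a-b) * ENNReal.ofReal (1/((a:ℤ):ℝ)^2)
                + g (2*n-a-b) * ENNReal.ofReal (1/((b:ℤ):ℝ)^2) else 0)
            + ((if s ≤ |((a:ℤ):ℝ)| then ENNReal.ofReal (1/((a:ℤ):ℝ)^2) else 0) * g (2*n-a-b)
               + (if s ≤ |((b:ℤ):ℝ)| then ENNReal.ofReal (1/((b:ℤ):ℝ)^2) else 0) * g (2*n-a-b))
            + ((if |((b:ℤ):ℝ)| < s then (1:ℝ≥0∞) else 0)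
                  * (ENNReal.ofReal (2/N) * g (2*n-a-b))
               + (if |((a:ℤ):ℝ)| < s then (1:ℝ≥0∞) else 0)
                  * (ENNReal.ofReal (2/N) * g (2*n-a-b)))) :=
            ENNReal.tsum_le_tsum (fun a => ENNReal.tsum_le_tsum (fun b => hpt a b))
        _ ≤ (ENNReal.ofReal Er * ENNReal.ofReal 4 + ENNReal.ofReal Er * ENNReal.ofReal 4)
            + (ENNReal.ofReal (4/s) * ENNReal.ofReal Rr + ENNReal.ofReal (4/s) * ENNReal.ofReal Rr)
            + (ENNReal.ofReal (3*s) * (ENNReal.ofReal (2/N) * ENNReal.ofReal Rr)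
               + ENNReal.ofReal (3*s) * (ENNReal.ofReal (2/N) * ENNReal.ofReal Rr)) := by
            simp only [ENNReal.tsum_add]
            exact add_le_add (add_le_add hB1 (add_le_add hB2a hB2b)) (add_le_add hB3a hB3b)
        _ ≤ ENNReal.ofReal B := by
            have q1 : (0:ℝ) ≤ Er * 4 := mul_nonneg hEr0 (by norm_num)
            have q2 : (0:ℝ) ≤ 4/s * Rr := mul_nonneg (by positivity) hRr0
            have q3 : (0:ℝ) ≤ 3*s*(2/N*Rr) := by
              apply mul_nonneg (by positivity) (mul_nonneg (by positivity) hRr0)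
            have e1 : ENNReal.ofReal Er * ENNReal.ofReal 4 = ENNReal.ofReal (Er * 4) :=
              (ENNReal.ofReal_mul hEr0).symm
            have e2 : ENNReal.ofReal (4/s) * ENNReal.ofReal Rr = ENNReal.ofReal (4/s * Rr) :=
              (ENNReal.ofReal_mul (by positivity)).symm
            have e3 : ENNReal.ofReal (3*s) * (ENNReal.ofReal (2/N) * ENNReal.ofReal Rr)
                = ENNReal.ofReal (3*s*(2/N*Rr)) := by
              rw [← ENNReal.ofReal_mul (by positivity : (0:ℝ) ≤ 2/N),
                ← ENNReal.ofReal_mul (by positivity : (0:ℝ) ≤ 3*s)]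
            rw [e1, e2, e3, ← ENNReal.ofReal_add q1 q1, ← ENNReal.ofReal_add q2 q2,
              ← ENNReal.ofReal_add q3 q3,
              ← ENNReal.ofReal_add (by linarith) (by linarith),
              ← ENNReal.ofReal_add (by linarith) (by linarith)]
            apply ENNReal.ofReal_le_ofReal
            have hkey : 3*s*(2/N*Rr) = 6*(Rr/s) := by
              rw [← hss]
              field_simp
              ring
            have hks : 4/s*Rr = 4*(Rr/s) := by ring
            rw [hBdef]
            have hq : 0 ≤ Rr / s := div_nonneg hRr0 hs0.le
            rw [hkey, hks]
            linarith [hEr0]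

  -- conversion to the goal
  apply stmt5_convert _ (fun i k => ht0 _ _) B hB0
  calc ∑' i : {i : ℤ // i ≠ n}, ∑' k : {k : ℤ // k ≠ n}, ENNReal.ofReal (t (i:ℤ) (k:ℤ))
      = ∑' i : {i : ℤ // i ≠ n}, ∑' k : ℤ, ENNReal.ofReal (t (i:ℤ) k) := by
        apply tsum_congr
        intro i
        calc ∑' k : {k : ℤ // k ≠ n}, ENNReal.ofReal (t (i:ℤ) (k:ℤ))
            = ∑' k : ℤ, Set.indicator {k : ℤ | k ≠ n} (fun k => ENNReal.ofReal (t (i:ℤ) k)) k :=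
              tsum_subtype {k : ℤ | k ≠ n} (fun k => ENNReal.ofReal (t (i:ℤ) k))
          _ = ∑' k : ℤ, ENNReal.ofReal (t (i:ℤ) k) := by
              apply tsum_congr
              intro k
              rw [Set.indicator_apply]
              by_cases hk : k ∈ {k : ℤ | k ≠ n}
              · rw [if_pos hk]
              · rw [if_neg hk]
                have hkn : k = n := not_not.mp hk
                rw [hkn, htn, ENNReal.ofReal_zero]
    _ = ∑' i : ℤ, ∑' k : ℤ, ENNReal.ofReal (t i k) := by
        calc ∑' i : {i : ℤ // i ≠ n}, ∑' k : ℤ, ENNReal.ofReal (t (i:ℤ) k)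
            = ∑' i : ℤ, Set.indicator {i : ℤ | i ≠ n}
                (fun i => ∑' k : ℤ, ENNReal.ofReal (t i k)) i :=
              tsum_subtype {i : ℤ | i ≠ n} (fun i => ∑' k : ℤ, ENNReal.ofReal (t i k))
          _ = ∑' i : ℤ, ∑' k : ℤ, ENNReal.ofReal (t i k) := by
              apply tsum_congr
              intro i
              rw [Set.indicator_apply]
              by_cases hi : i ∈ {i : ℤ | i ≠ n}
              · rw [if_pos hi]
              · rw [if_neg hi]
                have hin : i = n := not_not.mp hi
                rw [hin]
                simp only [htn']
                simp
    _ = ∑' a : ℤ, ∑' b : ℤ, ENNReal.ofReal (t (n-a) (n-b)) := by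
        have h1 : ∀ a : ℤ, ∑' k : ℤ, ENNReal.ofReal (t (n-a) k)
            = ∑' b : ℤ, ENNReal.ofReal (t (n-a) (n-b)) := by
          intro a
          simpa using ((Equiv.subLeft n).tsum_eq (fun k => ENNReal.ofReal (t (n-a) k))).symm
        calc ∑' i : ℤ, ∑' k : ℤ, ENNReal.ofReal (t i k)
            = ∑' a : ℤ, ∑' k : ℤ, ENNReal.ofReal (t (n-a) k) := by
              simpa using
                ((Equiv.subLeft n).tsum_eq (fun i => ∑' k : ℤ, ENNReal.ofReal (t i k))).symm
          _ = ∑' a : ℤ, ∑' b : ℤ, ENNReal.ofReal (t (n-a) (n-b)) := tsum_congr h1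
    _ ≤ ENNReal.ofReal B := hmain
end

section
/- Let r ∈ ℓ²(ℤ) have nonnegative entries, with norm ‖r‖ and tail norms E_N(r) = (Σ_{|j|≥N} r(j)²)^{1/2}. There is an absolute constant C such that for every N ≥ 1, Σ_{|n|>N} Σ_{k≠n} r(n+k)²/(n-k)² ≤ C(‖r‖²/N + E_N(r)²). -/
open Function Set
open scoped ENNReal NNReal

-- telescoping tail bound for 1/k^2
lemma tele_sum (N : ℕ) (hN : 1 ≤ N) :
    ∑' k : ℕ, ((((k : ℝ) + (N:ℝ)) + 1) ^ 2)⁻¹ ≤ 1 / (N:ℝ) := by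
  have hNpos : (0:ℝ) < N := by exact_mod_cast hN
  apply Real.tsum_le_of_sum_range_le (fun n => by positivity)
  intro M
  have key : ∑ i ∈ Finset.range M, ((((i : ℝ) + (N:ℝ)) + 1) ^ 2)⁻¹ ≤ 1 / (N:ℝ) - 1 / ((M:ℝ) + (N:ℝ)) := by
    induction M with
    | zero => simp
    | succ M ih =>
      rw [Finset.sum_range_succ]
      have h1 : (0:ℝ) < (M:ℝ) + N := by positivity
      have h2 : (0:ℝ) < ((M:ℝ) + N) + 1 := by positivity
      have hstep : ((((M : ℝ) + N) + 1) ^ 2)⁻¹ ≤ 1 / ((M:ℝ) + N) - 1 / (((M:ℝ) + N) + 1) := by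
        rw [div_sub_div _ _ h1.ne' h2.ne']
        have hnum : (1 * (((M:ℝ) + N) + 1) - ((M:ℝ) + N) * 1) = 1 := by ring
        rw [hnum, one_div]
        apply inv_anti₀ (by positivity)
        nlinarith
      have hcast : ((M:ℝ) + 1) + (N:ℝ) = ((M:ℝ) + N) + 1 := by ring
      push_cast
      rw [hcast]
      linarith
  have : (0:ℝ) ≤ 1 / ((M:ℝ) + N) := by positivity
  linarith

lemma summable_shift (N : ℕ) :
    Summable (fun k : ℕ => ((((k : ℝ) + (N:ℝ)) + 1) ^ 2)⁻¹) := by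
  have h : Summable (fun n : ℕ => ((n : ℝ) ^ 2)⁻¹) := by
    simpa [one_div] using (summable_one_div_nat_pow (p := 2)).mpr one_lt_two
  have := (summable_nat_add_iff (N + 1)).mpr h
  apply this.congr
  intro k
  push_cast
  ring_nf

lemma enn_shift_tail (N : ℕ) (hN : 1 ≤ N) :
    ∑' k : ℕ, ENNReal.ofReal (((((k : ℝ) + (N:ℝ)) + 1) ^ 2)⁻¹) ≤ ENNReal.ofReal (1 / (N:ℝ)) := by
  rw [← ENNReal.ofReal_tsum_of_nonneg (fun n => by positivity) (summable_shift N)]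
  exact ENNReal.ofReal_le_ofReal (tele_sum N hN)

lemma int_tail (N : ℕ) (hN : 1 ≤ N) :
    ∑' j : ℤ, (if (N:ℤ) + 1 ≤ |j| then ENNReal.ofReal (((j:ℝ)^2)⁻¹) else 0)
      ≤ ENNReal.ofReal (2 / (N:ℝ)) := by
  set h : ℤ → ℝ≥0∞ := fun j => if (N:ℤ)+1 ≤ |j| then ENNReal.ofReal (((j:ℝ)^2)⁻¹) else 0 with hh
  rw [tsum_of_nat_of_neg_add_one ENNReal.summable ENNReal.summable]
  have hP : ∑' n : ℕ, h (n : ℤ) ≤ ENNReal.ofReal (1 / (N:ℝ)) := by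
    have hinj : Function.Injective (fun k : ℕ => k + (N+1)) := fun a b hab => by
      simpa using hab
    have hsupp : Function.support (fun n : ℕ => h (n:ℤ)) ⊆ Set.range (fun k : ℕ => k + (N+1)) := by
      intro n hn
      simp only [Function.mem_support, hh] at hn
      by_contra hc
      simp only [Set.mem_range, not_exists] at hc
      have hlt : n < N + 1 := by
        by_contra h'
        exact hc (n - (N+1)) (by omega)
      have habs : ¬ ((N:ℤ)+1 ≤ |(n:ℤ)|) := by
        rw [abs_of_nonneg (Int.natCast_nonneg n)]
        exact_mod_cast Nat.not_le.mpr hlt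
      exact hn (if_neg habs)
    rw [← hinj.tsum_eq hsupp]
    have hval : ∀ k : ℕ, h (((k + (N+1) : ℕ)) : ℤ) = ENNReal.ofReal (((((k : ℝ) + (N:ℝ)) + 1) ^ 2)⁻¹) := by
      intro k
      have habs : (N:ℤ)+1 ≤ |(((k + (N+1) : ℕ)) : ℤ)| := by
        rw [abs_of_nonneg (Int.natCast_nonneg _)]
        push_cast; omega
      rw [hh]
      simp only [if_pos habs]
      congr 1
      push_cast
      ring_nf
    calc (∑' k : ℕ, h (((fun k : ℕ => k + (N+1)) k : ℕ) : ℤ))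
        = ∑' k : ℕ, ENNReal.ofReal (((((k : ℝ) + (N:ℝ)) + 1) ^ 2)⁻¹) := tsum_congr hval
      _ ≤ _ := enn_shift_tail N hN
  have hQ : ∑' n : ℕ, h (-((n : ℤ) + 1)) ≤ ENNReal.ofReal (1 / (N:ℝ)) := by
    have hinj : Function.Injective (fun k : ℕ => k + N) := fun a b hab => by
      simpa using hab
    have hsupp : Function.support (fun n : ℕ => h (-((n:ℤ)+1))) ⊆ Set.range (fun k : ℕ => k + N) := by
      intro n hn
      simp only [Function.mem_support, hh] at hn
      by_contra hc
      simp only [Set.mem_range, not_exists] at hc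
      have hlt : n < N := by
        by_contra h'
        exact hc (n - N) (by omega)
      have habs : ¬ ((N:ℤ)+1 ≤ |(-((n:ℤ)+1))|) := by
        rw [abs_neg, abs_of_nonneg (by positivity)]
        have : (n:ℤ) < N := by exact_mod_cast hlt
        omega
      exact hn (if_neg habs)
    rw [← hinj.tsum_eq hsupp]
    have hval : ∀ k : ℕ, h (-((((k + N : ℕ)) : ℤ) + 1)) = ENNReal.ofReal (((((k : ℝ) + (N:ℝ)) + 1) ^ 2)⁻¹) := by
      intro k
      have habs : (N:ℤ)+1 ≤ |(-((((k + N : ℕ)) : ℤ)+1))| := by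
        rw [abs_neg, abs_of_nonneg (by positivity)]
        push_cast; omega
      rw [hh]
      simp only [if_pos habs]
      congr 1
      push_cast
      ring_nf
    calc (∑' k : ℕ, h (-((((fun k : ℕ => k + N) k : ℕ) : ℤ) + 1)))
        = ∑' k : ℕ, ENNReal.ofReal (((((k : ℝ) + (N:ℝ)) + 1) ^ 2)⁻¹) := tsum_congr hval
      _ ≤ _ := enn_shift_tail N hN
  calc (∑' n : ℕ, h (n : ℤ)) + ∑' n : ℕ, h (-((n:ℤ)+1))
      ≤ ENNReal.ofReal (1 / (N:ℝ)) + ENNReal.ofReal (1 / (N:ℝ)) := add_le_add hP hQ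
    _ = ENNReal.ofReal (2 / (N:ℝ)) := by
        rw [← ENNReal.ofReal_add (by positivity) (by positivity)]
        congr 1
        ring
theorem stmt_6 :
    ∃ C : ℝ, 0 < C ∧ ∀ (r : ℤ → ℝ), (∀ k, 0 ≤ r k) →
      Summable (fun k => (r k) ^ 2) → ∀ N : ℕ, 1 ≤ N →
      ∑' n : {n : ℤ // (N : ℤ) < |n|}, ∑' k : {k : ℤ // k ≠ (n : ℤ)},
          (r ((n : ℤ) + (k : ℤ))) ^ 2 / (((n : ℤ) - (k : ℤ) : ℤ) : ℝ) ^ 2 ≤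
        C * ((∑' k : ℤ, (r k) ^ 2) / N +
          ∑' j : {j : ℤ // (N : ℤ) ≤ |j|}, (r (j : ℤ)) ^ 2) := by
  classical
  have hKsum : Summable (fun j : ℤ => (((j:ℝ))^2)⁻¹) := by
    simpa [one_div] using (Real.summable_one_div_int_pow (p := 2)).mpr one_lt_two
  set Kz : ℝ := ∑' j : ℤ, ((j:ℝ)^2)⁻¹ with hKz
  have hKnonneg : 0 ≤ Kz := tsum_nonneg (fun j => by positivity)
  refine ⟨Kz + 2, by linarith, ?_⟩
  intro r hr hsum N hN
  have hNR : (0:ℝ) < (N:ℝ) := by exact_mod_cast hN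
  set g : ℤ → ℝ≥0∞ := fun m => ENNReal.ofReal (r m ^ 2) with hg
  set w : ℤ → ℝ≥0∞ := fun j => ENNReal.ofReal (((j:ℝ)^2)⁻¹) with hw
  set Sr : ℝ := ∑' k : ℤ, (r k) ^ 2 with hSr'
  set Tr : ℝ := ∑' j : {j : ℤ // (N:ℤ) ≤ |j|}, (r (j:ℤ)) ^ 2 with hTr'
  have hSr : 0 ≤ Sr := tsum_nonneg fun k => by positivity
  have hTr : 0 ≤ Tr := tsum_nonneg fun k => by positivity
  set T : ℤ → ℝ≥0∞ := fun n => ∑' m : ℤ, g m * w (2*n - m) with hTd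
  have hS_enn : ∑' m : ℤ, g m = ENNReal.ofReal Sr :=
    (ENNReal.ofReal_tsum_of_nonneg (fun k => by positivity) hsum).symm
  have hW_enn : ∑' j : ℤ, w j = ENNReal.ofReal Kz :=
    (ENNReal.ofReal_tsum_of_nonneg (fun j => by positivity) hKsum).symm
  have hw_le_one : ∀ j : ℤ, w j ≤ 1 := by
    intro j
    simp only [hw]
    refine ENNReal.ofReal_le_one.mpr ?_
    rcases eq_or_ne j 0 with h | h
    · simp [h]
    · have h1 : (1:ℝ) ≤ |(j:ℝ)| := by
        have := Int.one_le_abs h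
        exact_mod_cast this
      have h2 : (1:ℝ) ≤ (j:ℝ)^2 := by nlinarith [sq_abs (j:ℝ), abs_nonneg (j:ℝ)]
      exact inv_le_one_of_one_le₀ h2
  have hT_le : ∀ n : ℤ, T n ≤ ENNReal.ofReal Sr := by
    intro n
    rw [← hS_enn]
    simp only [hTd]
    calc (∑' m : ℤ, g m * w (2*n - m)) ≤ ∑' m : ℤ, g m * 1 :=
          ENNReal.tsum_le_tsum (fun m => mul_le_mul_right (hw_le_one _) _)
      _ = ∑' m : ℤ, g m := by simp
  have hT_ne_top : ∀ n : ℤ, T n ≠ ⊤ :=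
    fun n => ne_top_of_le_ne_top ENNReal.ofReal_ne_top (hT_le n)
  -- rewrite LHS
  have lhs_eq : (∑' n : {n : ℤ // (N : ℤ) < |n|}, ∑' k : {k : ℤ // k ≠ (n : ℤ)},
          (r ((n : ℤ) + (k : ℤ))) ^ 2 / (((n : ℤ) - (k : ℤ) : ℤ) : ℝ) ^ 2)
      = (∑' n : {n : ℤ // (N : ℤ) < |n|}, T (n:ℤ)).toReal := by
    rw [ENNReal.tsum_toReal_eq (fun n => hT_ne_top _)]
    refine tsum_congr fun n => ?_
    have h1 : (∑' k : {k : ℤ // k ≠ (n:ℤ)},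
          (r ((n:ℤ) + (k:ℤ))) ^ 2 / ((((n:ℤ) - (k:ℤ) : ℤ)) : ℝ) ^ 2)
        = ∑' k : ℤ, (r ((n:ℤ) + k)) ^ 2 / ((((n:ℤ) - k : ℤ)) : ℝ) ^ 2 := by
      refine tsum_subtype_eq_of_support_subset
        (f := fun k : ℤ => (r ((n:ℤ) + k)) ^ 2 / ((((n:ℤ) - k : ℤ)) : ℝ) ^ 2)
        (s := {k : ℤ | k ≠ (n:ℤ)}) ?_
      intro k hk
      simp only [Function.mem_support, ne_eq] at hk
      simp only [Set.mem_setOf_eq, ne_eq]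
      intro hkn
      apply hk
      subst hkn
      simp
    rw [h1]
    have hrw : ∀ k : ℤ, (r ((n:ℤ) + k)) ^ 2 / ((((n:ℤ) - k : ℤ)) : ℝ) ^ 2
        = (g ((n:ℤ) + k) * w ((n:ℤ) - k)).toReal := by
      intro k
      simp only [hg, hw]
      rw [← ENNReal.ofReal_mul (by positivity)]
      rw [ENNReal.toReal_ofReal (by positivity)]
      rw [div_eq_mul_inv]
    rw [tsum_congr hrw]
    rw [← ENNReal.tsum_toReal_eq
      (fun k => ENNReal.mul_ne_top ENNReal.ofReal_ne_top ENNReal.ofReal_ne_top)]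
    congr 1
    simp only [hTd]
    rw [← (Equiv.addLeft (n:ℤ)).tsum_eq (fun m => g m * w (2*(n:ℤ) - m))]
    refine tsum_congr fun k => ?_
    simp only [Equiv.coe_addLeft]
    rw [show 2*(n:ℤ) - ((n:ℤ) + k) = (n:ℤ) - k by ring]
  -- core estimate
  have hinj : ∀ m : ℤ, Function.Injective
      (fun n : {n : ℤ // (N:ℤ) < |n|} => 2*(n:ℤ) - m) := by
    intro m n₁ n₂ hh
    simp only at hh
    exact Subtype.ext (by omega)
  have hWm : ∀ m : ℤ, (∑' n : {n : ℤ // (N:ℤ) < |n|}, w (2*(n:ℤ) - m))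
      ≤ ENNReal.ofReal Kz := by
    intro m
    rw [← hW_enn]
    exact ENNReal.tsum_comp_le_tsum_of_injective (hinj m) w
  set gT : ℤ → ℝ≥0∞ := fun m => if (N:ℤ) ≤ |m| then g m else 0 with hgT
  set gS : ℤ → ℝ≥0∞ := fun m => if (N:ℤ) ≤ |m| then 0 else g m with hgS
  have hdecomp : ∀ m : ℤ, g m = gT m + gS m := by
    intro m
    simp only [hgT, hgS]
    split <;> simp
  have hgT_sum : (∑' m : ℤ, gT m) = ENNReal.ofReal Tr := by
    have h1 : (∑' m : ℤ, gT m) = ∑' m : ℤ, Set.indicator {m : ℤ | (N:ℤ) ≤ |m|} g m :=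
      tsum_congr fun m => by
        by_cases hm : (N:ℤ) ≤ |m| <;> simp [hgT, Set.indicator_apply, hm]
    rw [h1, ← tsum_subtype]
    rw [hTr']
    simp only [hg]
    exact (ENNReal.ofReal_tsum_of_nonneg
      (f := fun j : {m : ℤ | (N:ℤ) ≤ |m|} => r (j:ℤ) ^ 2)
      (fun j => by positivity) (hsum.subtype _)).symm
  have hgS_le : ∀ m : ℤ, gS m ≤ g m := by
    intro m
    simp only [hgS]
    split
    · exact zero_le
    · exact le_rfl
  have hpiece1 : (∑' n : {n : ℤ // (N:ℤ) < |n|}, ∑' m : ℤ, gT m * w (2*(n:ℤ) - m))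
      ≤ ENNReal.ofReal Tr * ENNReal.ofReal Kz := by
    rw [ENNReal.tsum_comm]
    calc (∑' m : ℤ, ∑' n : {n : ℤ // (N:ℤ) < |n|}, gT m * w (2*(n:ℤ) - m))
        = ∑' m : ℤ, gT m * ∑' n : {n : ℤ // (N:ℤ) < |n|}, w (2*(n:ℤ) - m) :=
          tsum_congr fun m => ENNReal.tsum_mul_left
      _ ≤ ∑' m : ℤ, gT m * ENNReal.ofReal Kz :=
          ENNReal.tsum_le_tsum fun m => mul_le_mul_right (hWm m) _
      _ = (∑' m : ℤ, gT m) * ENNReal.ofReal Kz := ENNReal.tsum_mul_right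
      _ = ENNReal.ofReal Tr * ENNReal.ofReal Kz := by rw [hgT_sum]
  have htail : ∀ m : ℤ, ¬((N:ℤ) ≤ |m|) →
      (∑' n : {n : ℤ // (N:ℤ) < |n|}, w (2*(n:ℤ) - m)) ≤ ENNReal.ofReal (2/(N:ℝ)) := by
    intro m hm
    have heq : ∀ n : {n : ℤ // (N:ℤ) < |n|}, w (2*(n:ℤ) - m)
        = (fun j : ℤ => if (N:ℤ)+1 ≤ |j| then w j else 0) (2*(n:ℤ) - m) := by
      intro n
      have h1 : |2*(n:ℤ)| - |m| ≤ |2*(n:ℤ) - m| := abs_sub_abs_le_abs_sub _ _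
      have h2 : |2*(n:ℤ)| = 2 * |(n:ℤ)| := by rw [abs_mul]; norm_num
      have h3 : (N:ℤ) < |(n:ℤ)| := n.2
      have h4 : |m| < (N:ℤ) := lt_of_not_ge hm
      have h5 : (N:ℤ)+1 ≤ |2*(n:ℤ) - m| := by
        rw [h2] at h1
        linarith
      simp only [if_pos h5]
    rw [tsum_congr heq]
    calc (∑' n : {n : ℤ // (N:ℤ) < |n|},
            (fun j : ℤ => if (N:ℤ)+1 ≤ |j| then w j else 0) (2*(n:ℤ) - m))
        ≤ ∑' j : ℤ, (if (N:ℤ)+1 ≤ |j| then w j else 0) :=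
          ENNReal.tsum_comp_le_tsum_of_injective (hinj m) _
      _ ≤ ENNReal.ofReal (2/(N:ℝ)) := by
          have h6 := int_tail N hN
          simpa only [hw] using h6
  have hpiece2 : (∑' n : {n : ℤ // (N:ℤ) < |n|}, ∑' m : ℤ, gS m * w (2*(n:ℤ) - m))
      ≤ ENNReal.ofReal Sr * ENNReal.ofReal (2/(N:ℝ)) := by
    rw [ENNReal.tsum_comm]
    calc (∑' m : ℤ, ∑' n : {n : ℤ // (N:ℤ) < |n|}, gS m * w (2*(n:ℤ) - m))
        = ∑' m : ℤ, gS m * ∑' n : {n : ℤ // (N:ℤ) < |n|}, w (2*(n:ℤ) - m) :=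
          tsum_congr fun m => ENNReal.tsum_mul_left
      _ ≤ ∑' m : ℤ, gS m * ENNReal.ofReal (2/(N:ℝ)) := by
          apply ENNReal.tsum_le_tsum
          intro m
          by_cases hm : (N:ℤ) ≤ |m|
          · simp [hgS, hm]
          · exact mul_le_mul_right (htail m hm) _
      _ = (∑' m : ℤ, gS m) * ENNReal.ofReal (2/(N:ℝ)) := ENNReal.tsum_mul_right
      _ ≤ ENNReal.ofReal Sr * ENNReal.ofReal (2/(N:ℝ)) := by
          apply mul_le_mul_left
          rw [← hS_enn]
          exact ENNReal.tsum_le_tsum hgS_le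
  have core : (∑' n : {n : ℤ // (N:ℤ) < |n|}, T (n:ℤ))
      ≤ ENNReal.ofReal ((Kz + 2) * (Sr / (N:ℝ) + Tr)) := by
    have hsplit : (∑' n : {n : ℤ // (N:ℤ) < |n|}, T (n:ℤ))
        = (∑' n : {n : ℤ // (N:ℤ) < |n|}, ∑' m : ℤ, gT m * w (2*(n:ℤ) - m))
          + (∑' n : {n : ℤ // (N:ℤ) < |n|}, ∑' m : ℤ, gS m * w (2*(n:ℤ) - m)) := by
      rw [← ENNReal.tsum_add]
      refine tsum_congr fun n => ?_
      simp only [hTd]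
      rw [← ENNReal.tsum_add]
      exact tsum_congr fun m => by rw [hdecomp m, add_mul]
    rw [hsplit]
    calc (∑' n : {n : ℤ // (N:ℤ) < |n|}, ∑' m : ℤ, gT m * w (2*(n:ℤ) - m))
          + (∑' n : {n : ℤ // (N:ℤ) < |n|}, ∑' m : ℤ, gS m * w (2*(n:ℤ) - m))
        ≤ ENNReal.ofReal Tr * ENNReal.ofReal Kz
          + ENNReal.ofReal Sr * ENNReal.ofReal (2/(N:ℝ)) := add_le_add hpiece1 hpiece2
      _ = ENNReal.ofReal (Tr * Kz + Sr * (2/(N:ℝ))) := by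
          rw [← ENNReal.ofReal_mul hTr, ← ENNReal.ofReal_mul hSr,
            ← ENNReal.ofReal_add (by positivity) (by positivity)]
      _ ≤ ENNReal.ofReal ((Kz + 2) * (Sr / (N:ℝ) + Tr)) := by
          apply ENNReal.ofReal_le_ofReal
          have hx : 0 ≤ Kz * (Sr / (N:ℝ)) := mul_nonneg hKnonneg (div_nonneg hSr hNR.le)
          have hexp : (Kz + 2) * (Sr / (N:ℝ) + Tr) - (Tr * Kz + Sr * (2 / (N:ℝ)))
              = Kz * (Sr / (N:ℝ)) + 2 * Tr := by ring
          linarith [hx, hTr]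
  rw [lhs_eq]
  exact ENNReal.toReal_le_of_le_ofReal
    (mul_nonneg (by linarith) (add_nonneg (div_nonneg hSr hNR.le) hTr)) core
end

section
/- Let r ∈ ℓ²(ℤ) have nonnegative entries, with norm ‖r‖ and tail norms E_N(r). There is an absolute constant C such that for every N ≥ 1, Σ_{|n|>N} Σ_{i≠n} Σ_{p≠n} r(n+i)²r(n+p)²/(|n-i||n-p|) ≤ C(‖r‖²/N + E_N(r)²)·‖r‖². -/
open scoped ENNReal



open scoped ENNReal

lemma aux_ofReal_tsum_le {ι : Type*} (f : ι → ℝ) (hf : ∀ i, 0 ≤ f i) :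
    ENNReal.ofReal (∑' i, f i) ≤ ∑' i, ENNReal.ofReal (f i) := by
  by_cases h : Summable f
  · exact (ENNReal.ofReal_tsum_of_nonneg hf h).le
  · rw [tsum_eq_zero_of_not_summable h]; simp

lemma aux_telescope (a : ℕ → ℝ) (h0 : ∀ n, 0 ≤ a n) (hm : ∀ n, a (n + 1) ≤ a n) :
    ∑' n, ENNReal.ofReal (a n - a (n + 1)) ≤ ENNReal.ofReal (a 0) := by
  rw [ENNReal.tsum_eq_iSup_sum' _ Finset.exists_nat_subset_range]
  refine iSup_le fun n => ?_
  rw [← ENNReal.ofReal_sum_of_nonneg (fun i _ => sub_nonneg.2 (hm i))]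
  apply ENNReal.ofReal_le_ofReal
  rw [Finset.sum_range_sub' a n]
  linarith [h0 n]

lemma aux_tail (M : ℕ) :
    ∑' j : ℕ, ENNReal.ofReal (1 / ((j : ℝ) + M + 2) ^ 2) ≤ ENNReal.ofReal (1 / (M + 1)) := by
  have h1 : ∀ j : ℕ, ENNReal.ofReal (1 / ((j : ℝ) + M + 2) ^ 2) ≤
      ENNReal.ofReal ((fun j : ℕ => 1 / ((j : ℝ) + M + 1)) j -
        (fun j : ℕ => 1 / ((j : ℝ) + M + 1)) (j + 1)) := by
    intro j
    apply ENNReal.ofReal_le_ofReal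
    have hj1 : (0:ℝ) < (j : ℝ) + M + 1 := by positivity
    have hj2 : (0:ℝ) < (j : ℝ) + M + 2 := by positivity
    have : 1 / ((j : ℝ) + M + 1) - 1 / (((j:ℕ)+1 : ℕ) + M + 1) =
        1 / (((j : ℝ) + M + 1) * ((j : ℝ) + M + 2)) := by
      push_cast
      have e : (j:ℝ) + 1 + M + 1 = (j:ℝ) + M + 2 := by ring
      rw [e, div_sub_div _ _ (ne_of_gt hj1) (ne_of_gt hj2), div_eq_div_iff (by positivity) (by positivity)]
      ring
    rw [this]
    apply div_le_div_of_nonneg_left (by norm_num) (by positivity)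
    nlinarith
  calc ∑' j : ℕ, ENNReal.ofReal (1 / ((j : ℝ) + M + 2) ^ 2) ≤ _ :=
        ENNReal.tsum_le_tsum h1
    _ ≤ ENNReal.ofReal ((fun j : ℕ => 1 / ((j : ℝ) + M + 1)) 0) := by
        apply aux_telescope
        · intro n; positivity
        · intro n
          apply div_le_div_of_nonneg_left (by norm_num) (by positivity)
          push_cast; linarith
    _ ≤ _ := by norm_num

lemma aux_nat_sq : ∑' n : ℕ, ENNReal.ofReal (1 / (n : ℝ) ^ 2) ≤ 2 := by
  rw [tsum_eq_zero_add' ENNReal.summable, tsum_eq_zero_add' ENNReal.summable]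
  have h0 : ENNReal.ofReal (1 / ((0:ℕ) : ℝ) ^ 2) = 0 := by norm_num
  have h1 : ENNReal.ofReal (1 / (((0:ℕ)+1 : ℕ) : ℝ) ^ 2) = 1 := by norm_num
  rw [h0, h1]
  have := aux_tail 0
  have he : ∀ n : ℕ, ENNReal.ofReal (1 / ((n + 1 + 1 : ℕ) : ℝ) ^ 2) =
      ENNReal.ofReal (1 / ((n : ℝ) + (0:ℕ) + 2) ^ 2) := by
    intro n; push_cast; ring_nf
  calc 0 + (1 + ∑' n : ℕ, ENNReal.ofReal (1 / ((n + 1 + 1 : ℕ) : ℝ) ^ 2))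
      = 1 + ∑' n : ℕ, ENNReal.ofReal (1 / ((n : ℝ) + (0:ℕ) + 2) ^ 2) := by
        rw [zero_add, tsum_congr he]
    _ ≤ 1 + ENNReal.ofReal (1 / ((0:ℕ) + 1)) := add_le_add_right (aux_tail 0) 1
    _ ≤ 2 := by norm_num

lemma aux_bool_prod (g : ℕ → ℝ≥0∞) : ∑' p : Bool × ℕ, g p.2 = 2 * ∑' n, g n := by
  rw [ENNReal.tsum_prod']
  rw [tsum_bool]
  ring

lemma aux_int_sq : ∑' k : ℤ, ENNReal.ofReal (1 / (k : ℝ) ^ 2) ≤ 4 := by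
  have hinj : Function.Injective (fun k : ℤ => ((decide (0 < k), k.natAbs) : Bool × ℕ)) := by
    intro a b h
    simp only [Prod.mk.injEq, decide_eq_decide] at h
    omega
  have hcong : ∀ k : ℤ, ENNReal.ofReal (1 / (k : ℝ) ^ 2) =
      (fun p : Bool × ℕ => ENNReal.ofReal (1 / (p.2 : ℝ) ^ 2))
        ((fun k : ℤ => ((decide (0 < k), k.natAbs) : Bool × ℕ)) k) := by
    intro k
    simp only [Nat.cast_natAbs]
    rw [Int.cast_abs, sq_abs]
  calc ∑' k : ℤ, ENNReal.ofReal (1 / (k : ℝ) ^ 2)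
      = ∑' k : ℤ, (fun p : Bool × ℕ => ENNReal.ofReal (1 / (p.2 : ℝ) ^ 2))
        ((fun k : ℤ => ((decide (0 < k), k.natAbs) : Bool × ℕ)) k) := tsum_congr hcong
    _ ≤ ∑' p : Bool × ℕ, ENNReal.ofReal (1 / (p.2 : ℝ) ^ 2) :=
        ENNReal.tsum_comp_le_tsum_of_injective hinj _
    _ = 2 * ∑' n : ℕ, ENNReal.ofReal (1 / (n : ℝ) ^ 2) := aux_bool_prod (fun n => ENNReal.ofReal (1 / (n : ℝ) ^ 2))
    _ ≤ 2 * 2 := by gcongr; exact aux_nat_sq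
    _ = 4 := by norm_num

lemma aux_S_tail (N : ℕ) (hN : 1 ≤ N) :
    ∑' n : {n : ℤ // (N : ℤ) < |n|}, ENNReal.ofReal (1 / ((n.1.natAbs : ℝ) + 2) ^ 2) ≤
      ENNReal.ofReal (2 / N) := by
  set ψ : {n : ℤ // (N : ℤ) < |n|} → Bool × ℕ :=
    fun n => (decide (0 < n.1), n.1.natAbs - (N + 1)) with hψ
  have hmem : ∀ n : {n : ℤ // (N : ℤ) < |n|}, N + 1 ≤ n.1.natAbs := by
    intro n; have h := n.2; rw [Int.abs_eq_natAbs] at h; omega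
  have hinj : Function.Injective ψ := by
    intro a b h
    simp only [hψ, Prod.mk.injEq, decide_eq_decide] at h
    have ha := hmem a; have hb := hmem b
    have : a.1 = b.1 := by omega
    exact Subtype.ext this
  have hcong : ∀ n : {n : ℤ // (N : ℤ) < |n|},
      ENNReal.ofReal (1 / ((n.1.natAbs : ℝ) + 2) ^ 2) =
      (fun p : Bool × ℕ => ENNReal.ofReal (1 / ((p.2 : ℝ) + (N + 1) + 2) ^ 2)) (ψ n) := by
    intro n
    have h1 : ((n.1.natAbs - (N + 1) : ℕ) : ℝ) = (n.1.natAbs : ℝ) - (N + 1) := by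
      have := hmem n; push_cast [Nat.cast_sub this]; ring
    simp only [hψ]
    rw [h1]
    ring_nf
  calc ∑' n : {n : ℤ // (N : ℤ) < |n|}, ENNReal.ofReal (1 / ((n.1.natAbs : ℝ) + 2) ^ 2)
      = ∑' n, (fun p : Bool × ℕ =>
          ENNReal.ofReal (1 / ((p.2 : ℝ) + (N + 1) + 2) ^ 2)) (ψ n) := tsum_congr hcong
    _ ≤ ∑' p : Bool × ℕ, ENNReal.ofReal (1 / ((p.2 : ℝ) + (N + 1) + 2) ^ 2) :=
        ENNReal.tsum_comp_le_tsum_of_injective hinj _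
    _ = 2 * ∑' j : ℕ, ENNReal.ofReal (1 / ((j : ℝ) + (N + 1) + 2) ^ 2) :=
        aux_bool_prod (fun j => ENNReal.ofReal (1 / ((j : ℝ) + (N + 1) + 2) ^ 2))
    _ ≤ 2 * ENNReal.ofReal (1 / ((N + 1 : ℕ) + 1)) := by
        gcongr
        have := aux_tail (N + 1)
        have he : ∀ j : ℕ, (1 : ℝ) / ((j : ℝ) + (N + 1) + 2) ^ 2 =
            1 / ((j : ℝ) + ((N + 1 : ℕ) : ℝ) + 2) ^ 2 := by intro j; push_cast; ring_nf
        calc ∑' j : ℕ, ENNReal.ofReal (1 / ((j : ℝ) + (N + 1) + 2) ^ 2)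
            = ∑' j : ℕ, ENNReal.ofReal (1 / ((j : ℝ) + ((N + 1 : ℕ) : ℝ) + 2) ^ 2) := by
              exact tsum_congr fun j => by rw [he j]
          _ ≤ _ := aux_tail (N + 1)
    _ ≤ ENNReal.ofReal (2 / N) := by
        rw [← ENNReal.ofReal_ofNat 2, ← ENNReal.ofReal_mul (by norm_num)]
        apply ENNReal.ofReal_le_ofReal
        rw [mul_one_div]
        apply div_le_div_of_nonneg_left (by norm_num) (by positivity)
        push_cast; linarith

lemma aux_half : ENNReal.ofReal (1 / 2 : ℝ) = 2⁻¹ := by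
  rw [one_div, ENNReal.ofReal_inv_of_pos two_pos]
  norm_num

lemma aux_point (a b : ℝ) (ha : 0 ≤ a) (hb : 0 ≤ b) (c d : ℤ) (hc : c ≠ 0) (hd : d ≠ 0) :
    ENNReal.ofReal (a * b / (((|c| : ℤ) : ℝ) * ((|d| : ℤ) : ℝ))) ≤
      ENNReal.ofReal a * ENNReal.ofReal b *
        (2⁻¹ * ENNReal.ofReal (1 / (c : ℝ) ^ 2) + 2⁻¹ * ENNReal.ofReal (1 / (d : ℝ) ^ 2)) := by
  set x : ℝ := ((|c| : ℤ) : ℝ) with hxdef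
  set y : ℝ := ((|d| : ℤ) : ℝ) with hydef
  have hx : (1:ℝ) ≤ x := by rw [hxdef]; exact_mod_cast Int.one_le_abs hc
  have hy : (1:ℝ) ≤ y := by rw [hydef]; exact_mod_cast Int.one_le_abs hd
  have hx0 : (0:ℝ) < x := lt_of_lt_of_le one_pos hx
  have hy0 : (0:ℝ) < y := lt_of_lt_of_le one_pos hy
  have hcx : (c : ℝ) ^ 2 = x ^ 2 := by
    rw [hxdef, Int.cast_abs, sq_abs]
  have hdy : (d : ℝ) ^ 2 = y ^ 2 := by
    rw [hydef, Int.cast_abs, sq_abs]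
  have base : 1 / (x * y) ≤ 1 / (2 * x ^ 2) + 1 / (2 * y ^ 2) := by
    rw [div_add_div _ _ (by positivity) (by positivity),
      div_le_div_iff₀ (by positivity) (by positivity)]
    nlinarith [mul_nonneg (mul_nonneg hx0.le hy0.le) (sq_nonneg (x - y))]
  have hreal : a * b / (x * y) ≤ a * b * (1 / (2 * x ^ 2) + 1 / (2 * y ^ 2)) := by
    rw [div_eq_mul_one_div]
    exact mul_le_mul_of_nonneg_left base (mul_nonneg ha hb)
  calc ENNReal.ofReal (a * b / (x * y)) ≤
      ENNReal.ofReal (a * b * (1 / (2 * x ^ 2) + 1 / (2 * y ^ 2))) :=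
        ENNReal.ofReal_le_ofReal hreal
    _ = ENNReal.ofReal a * ENNReal.ofReal b *
        (ENNReal.ofReal (1 / (2 * x ^ 2)) + ENNReal.ofReal (1 / (2 * y ^ 2))) := by
        rw [ENNReal.ofReal_mul (mul_nonneg ha hb), ENNReal.ofReal_mul ha,
          ENNReal.ofReal_add (by positivity) (by positivity)]
    _ = ENNReal.ofReal a * ENNReal.ofReal b *
        (2⁻¹ * ENNReal.ofReal (1 / x ^ 2) + 2⁻¹ * ENNReal.ofReal (1 / y ^ 2)) := by
        have e1 : (1:ℝ) / (2 * x ^ 2) = (1/2) * (1 / x ^ 2) := by ring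
        have e2 : (1:ℝ) / (2 * y ^ 2) = (1/2) * (1 / y ^ 2) := by ring
        rw [e1, e2, ENNReal.ofReal_mul (by norm_num), ENNReal.ofReal_mul (by norm_num),
          aux_half]
    _ = ENNReal.ofReal a * ENNReal.ofReal b *
        (2⁻¹ * ENNReal.ofReal (1 / (c : ℝ) ^ 2) + 2⁻¹ * ENNReal.ofReal (1 / (d : ℝ) ^ 2)) := by
        rw [hcx, hdy]

theorem stmt_7 :
    ∃ C : ℝ, 0 < C ∧ ∀ (r : ℤ → ℝ), (∀ k, 0 ≤ r k) →
      Summable (fun k => (r k) ^ 2) → ∀ N : ℕ, 1 ≤ N →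
      ∑' n : {n : ℤ // (N : ℤ) < |n|}, ∑' i : {i : ℤ // i ≠ (n : ℤ)},
        ∑' p : {p : ℤ // p ≠ (n : ℤ)},
          (r ((n : ℤ) + (i : ℤ))) ^ 2 * (r ((n : ℤ) + (p : ℤ))) ^ 2 /
            (((|(n : ℤ) - (i : ℤ)| : ℤ) : ℝ) * ((|(n : ℤ) - (p : ℤ)| : ℤ) : ℝ)) ≤
        C * ((∑' k : ℤ, (r k) ^ 2) / N +
            ∑' j : {j : ℤ // (N : ℤ) ≤ |j|}, (r (j : ℤ)) ^ 2) *
          (∑' k : ℤ, (r k) ^ 2) := by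
  refine ⟨4, by norm_num, ?_⟩
  intro r hr hsum N hN
  set T : ℝ := ∑' k : ℤ, (r k) ^ 2 with hTdef
  set E : ℝ := ∑' j : {j : ℤ // (N : ℤ) ≤ |j|}, (r (j : ℤ)) ^ 2 with hEdef
  set ρ : ℤ → ℝ≥0∞ := fun m => ENNReal.ofReal (r m ^ 2) with hρdef
  set w : ℤ → ℝ≥0∞ := fun c => ENNReal.ofReal (1 / (c : ℝ) ^ 2) with hwdef
  set T' : ℝ≥0∞ := ∑' m : ℤ, ρ m with hT'def
  set E' : ℝ≥0∞ := ∑' j : {j : ℤ // (N : ℤ) ≤ |j|}, ρ (j : ℤ) with hE'def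
  have hT0 : 0 ≤ T := tsum_nonneg fun k => sq_nonneg _
  have hE0 : 0 ≤ E := tsum_nonneg fun j => sq_nonneg _
  have hN0 : (0:ℝ) < N := by exact_mod_cast hN
  have hT' : T' = ENNReal.ofReal T :=
    (ENNReal.ofReal_tsum_of_nonneg (fun k => sq_nonneg _) hsum).symm
  have hE' : E' = ENNReal.ofReal E :=
    (ENNReal.ofReal_tsum_of_nonneg (fun j => sq_nonneg _)
      (hsum.subtype _)).symm
  -- abbreviations
  set S := {n : ℤ // (N : ℤ) < |n|}
  have hden : ∀ x : ℤ, (0:ℝ) ≤ ((|x| : ℤ) : ℝ) := fun x => by exact_mod_cast abs_nonneg x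
  have htnn : ∀ (n : S) (i p : {i : ℤ // i ≠ (n : ℤ)}),
      0 ≤ (r ((n : ℤ) + (i : ℤ))) ^ 2 * (r ((n : ℤ) + (p : ℤ))) ^ 2 /
        (((|(n : ℤ) - (i : ℤ)| : ℤ) : ℝ) * ((|(n : ℤ) - (p : ℤ)| : ℤ) : ℝ)) := by
    intro n i p
    exact div_nonneg (mul_nonneg (sq_nonneg _) (sq_nonneg _))
      (mul_nonneg (hden _) (hden _))
  -- Step 1: push ofReal inside
  have h1 : ENNReal.ofReal (∑' n : S, ∑' i : {i : ℤ // i ≠ (n : ℤ)},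
        ∑' p : {p : ℤ // p ≠ (n : ℤ)},
          (r ((n : ℤ) + (i : ℤ))) ^ 2 * (r ((n : ℤ) + (p : ℤ))) ^ 2 /
            (((|(n : ℤ) - (i : ℤ)| : ℤ) : ℝ) * ((|(n : ℤ) - (p : ℤ)| : ℤ) : ℝ))) ≤
      ∑' n : S, ∑' i : {i : ℤ // i ≠ (n : ℤ)}, ∑' p : {p : ℤ // p ≠ (n : ℤ)},
        ENNReal.ofReal ((r ((n : ℤ) + (i : ℤ))) ^ 2 * (r ((n : ℤ) + (p : ℤ))) ^ 2 /
          (((|(n : ℤ) - (i : ℤ)| : ℤ) : ℝ) * ((|(n : ℤ) - (p : ℤ)| : ℤ) : ℝ))) := by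
    refine (aux_ofReal_tsum_le _ fun n =>
      tsum_nonneg fun i => tsum_nonneg fun p => htnn n i p).trans
      (ENNReal.tsum_le_tsum fun n => ?_)
    refine (aux_ofReal_tsum_le _ fun i => tsum_nonneg fun p => htnn n i p).trans
      (ENNReal.tsum_le_tsum fun i => ?_)
    exact aux_ofReal_tsum_le _ fun p => htnn n i p
  -- Step 2: pointwise bound
  have h2 : ∀ (n : S) (i p : {i : ℤ // i ≠ (n : ℤ)}),
      ENNReal.ofReal ((r ((n : ℤ) + (i : ℤ))) ^ 2 * (r ((n : ℤ) + (p : ℤ))) ^ 2 /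
          (((|(n : ℤ) - (i : ℤ)| : ℤ) : ℝ) * ((|(n : ℤ) - (p : ℤ)| : ℤ) : ℝ))) ≤
        ρ ((n : ℤ) + (i : ℤ)) * ρ ((n : ℤ) + (p : ℤ)) *
          (2⁻¹ * w ((n : ℤ) - (i : ℤ)) + 2⁻¹ * w ((n : ℤ) - (p : ℤ))) := by
    intro n i p
    exact aux_point _ _ (sq_nonneg _) (sq_nonneg _) _ _
      (sub_ne_zero.2 (Ne.symm i.2)) (sub_ne_zero.2 (Ne.symm p.2))
  -- Step 3: algebra
  set P : S → ℝ≥0∞ := fun n => ∑' i : {i : ℤ // i ≠ (n : ℤ)}, ρ ((n : ℤ) + i) with hPdef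
  set Q : S → ℝ≥0∞ := fun n =>
    ∑' i : {i : ℤ // i ≠ (n : ℤ)}, ρ ((n : ℤ) + i) * w ((n : ℤ) - i) with hQdef
  have h3 : ∀ n : S,
      (∑' i : {i : ℤ // i ≠ (n : ℤ)}, ∑' p : {p : ℤ // p ≠ (n : ℤ)},
        ρ ((n : ℤ) + (i : ℤ)) * ρ ((n : ℤ) + (p : ℤ)) *
          (2⁻¹ * w ((n : ℤ) - (i : ℤ)) + 2⁻¹ * w ((n : ℤ) - (p : ℤ)))) = P n * Q n := by
    intro n
    calc (∑' i : {i : ℤ // i ≠ (n : ℤ)}, ∑' p : {p : ℤ // p ≠ (n : ℤ)},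
        ρ ((n : ℤ) + (i : ℤ)) * ρ ((n : ℤ) + (p : ℤ)) *
          (2⁻¹ * w ((n : ℤ) - (i : ℤ)) + 2⁻¹ * w ((n : ℤ) - (p : ℤ))))
        = ∑' i : {i : ℤ // i ≠ (n : ℤ)}, ∑' p : {p : ℤ // p ≠ (n : ℤ)},
          ((ρ ((n : ℤ) + (i : ℤ)) * (2⁻¹ * w ((n : ℤ) - (i : ℤ)))) * ρ ((n : ℤ) + (p : ℤ)) +
           (2⁻¹ * ρ ((n : ℤ) + (i : ℤ))) *
             (ρ ((n : ℤ) + (p : ℤ)) * w ((n : ℤ) - (p : ℤ)))) :=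
          tsum_congr fun i => tsum_congr fun p => by ring
      _ = ∑' i : {i : ℤ // i ≠ (n : ℤ)},
          ((ρ ((n : ℤ) + (i : ℤ)) * (2⁻¹ * w ((n : ℤ) - (i : ℤ)))) * P n +
           (2⁻¹ * ρ ((n : ℤ) + (i : ℤ))) * Q n) := by
          refine tsum_congr fun i => ?_
          rw [ENNReal.tsum_add, ENNReal.tsum_mul_left, ENNReal.tsum_mul_left]
      _ = ∑' i : {i : ℤ // i ≠ (n : ℤ)},
          ((2⁻¹ * P n) * (ρ ((n : ℤ) + (i : ℤ)) * w ((n : ℤ) - (i : ℤ))) +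
           (2⁻¹ * Q n) * ρ ((n : ℤ) + (i : ℤ))) := tsum_congr fun i => by ring
      _ = (2⁻¹ * P n) * Q n + (2⁻¹ * Q n) * P n := by
          rw [ENNReal.tsum_add, ENNReal.tsum_mul_left, ENNReal.tsum_mul_left]
      _ = (2⁻¹ + 2⁻¹) * (P n * Q n) := by ring
      _ = P n * Q n := by rw [ENNReal.inv_two_add_inv_two, one_mul]
  -- Step 4
  have h4 : ∀ n : S, P n ≤ T' := by
    intro n
    calc P n ≤ ∑' m : ℤ, ρ ((n : ℤ) + m) :=
        ENNReal.tsum_comp_le_tsum_of_injective Subtype.val_injective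
          (fun m => ρ ((n : ℤ) + m))
      _ = T' := by simpa using (Equiv.addLeft ((n : ℤ))).tsum_eq ρ
  -- Step 5
  set Qbar : S → ℝ≥0∞ := fun n => ∑' m : ℤ, ρ m * w (2 * (n : ℤ) - m) with hQbardef
  have h5 : ∀ n : S, Q n ≤ Qbar n := by
    intro n
    calc Q n ≤ ∑' m : ℤ, ρ ((n : ℤ) + m) * w ((n : ℤ) - m) :=
        ENNReal.tsum_comp_le_tsum_of_injective Subtype.val_injective
          (fun m => ρ ((n : ℤ) + m) * w ((n : ℤ) - m))
      _ = ∑' m : ℤ, (fun m : ℤ => ρ m * w (2 * (n : ℤ) - m)) ((Equiv.addLeft ((n : ℤ))) m) := by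
          refine tsum_congr fun m => ?_
          have : 2 * (n : ℤ) - ((n : ℤ) + m) = (n : ℤ) - m := by ring
          simp only [Equiv.coe_addLeft, this]
      _ = Qbar n := by
          rw [hQbardef]
          exact (Equiv.addLeft ((n : ℤ))).tsum_eq (fun m : ℤ => ρ m * w (2 * (n : ℤ) - m))
  -- Step 6
  set G : ℤ → ℝ≥0∞ := fun m => ∑' n : S, w (2 * (n : ℤ) - m) with hGdef
  have h6 : ∑' n : S, Qbar n = ∑' m : ℤ, ρ m * G m := by
    rw [hQbardef, hGdef]
    rw [ENNReal.tsum_comm]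
    exact tsum_congr fun m => ENNReal.tsum_mul_left
  -- Step 7a
  have h7a : ∀ m : ℤ, G m ≤ 4 := by
    intro m
    have hinj2 : Function.Injective (fun n : ℤ => 2 * n - m) := by
      intro a b h
      have h' : 2 * a - m = 2 * b - m := h
      omega
    calc G m ≤ ∑' n : ℤ, w (2 * n - m) :=
        ENNReal.tsum_comp_le_tsum_of_injective Subtype.val_injective
          (fun n : ℤ => w (2 * n - m))
      _ ≤ ∑' k : ℤ, w k := ENNReal.tsum_comp_le_tsum_of_injective hinj2 w
      _ ≤ 4 := by rw [hwdef]; exact aux_int_sq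
  -- Step 7b
  have h7b : ∀ m : ℤ, |m| < (N : ℤ) → G m ≤ ENNReal.ofReal (2 / N) := by
    intro m hm
    have key : ∀ n : S, w (2 * (n : ℤ) - m) ≤
        ENNReal.ofReal (1 / ((n.1.natAbs : ℝ) + 2) ^ 2) := by
      intro n
      rw [hwdef]
      apply ENNReal.ofReal_le_ofReal
      have habs : n.1.natAbs + 2 ≤ (2 * n.1 - m).natAbs := by
        have h1 := n.2
        rw [Int.abs_eq_natAbs] at h1 hm
        omega
      have hx : ((2 * (n : ℤ) - m : ℤ) : ℝ) ^ 2 = (((2 * n.1 - m).natAbs : ℕ) : ℝ) ^ 2 := by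
        rw [Nat.cast_natAbs, Int.cast_abs, sq_abs]
      have hle : ((n.1.natAbs : ℝ) + 2) ^ 2 ≤ ((2 * (n : ℤ) - m : ℤ) : ℝ) ^ 2 := by
        rw [hx]
        have : ((n.1.natAbs : ℝ) + 2) ≤ (((2 * n.1 - m).natAbs : ℕ) : ℝ) := by
          exact_mod_cast habs
        exact pow_le_pow_left₀ (by positivity) this 2
      exact one_div_le_one_div_of_le (by positivity) hle
    calc G m ≤ ∑' n : S, ENNReal.ofReal (1 / ((n.1.natAbs : ℝ) + 2) ^ 2) :=
        ENNReal.tsum_le_tsum key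
      _ ≤ ENNReal.ofReal (2 / N) := aux_S_tail N hN
  -- Step 8
  have h8 : ∑' m : ℤ, ρ m * G m ≤ ENNReal.ofReal (2 / N) * T' + 4 * E' := by
    have hpt : ∀ m : ℤ, ρ m * G m ≤ ENNReal.ofReal (2 / N) * ρ m +
        Set.indicator {j : ℤ | (N : ℤ) ≤ |j|} (fun j => 4 * ρ j) m := by
      intro m
      by_cases hm : (N : ℤ) ≤ |m|
      · have hmem : m ∈ {j : ℤ | (N : ℤ) ≤ |j|} := hm
        rw [Set.indicator_of_mem hmem]
        refine le_add_left ?_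
        calc ρ m * G m ≤ ρ m * 4 := mul_le_mul' le_rfl (h7a m)
          _ = 4 * ρ m := mul_comm _ _
      · have hmem : m ∉ {j : ℤ | (N : ℤ) ≤ |j|} := hm
        rw [Set.indicator_of_notMem hmem]
        push_neg at hm
        refine le_add_right ?_
        calc ρ m * G m ≤ ρ m * ENNReal.ofReal (2 / N) := mul_le_mul' le_rfl (h7b m hm)
          _ = ENNReal.ofReal (2 / N) * ρ m := mul_comm _ _
    calc ∑' m : ℤ, ρ m * G m
        ≤ ∑' m : ℤ, (ENNReal.ofReal (2 / N) * ρ m +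
            Set.indicator {j : ℤ | (N : ℤ) ≤ |j|} (fun j => 4 * ρ j) m) :=
          ENNReal.tsum_le_tsum hpt
      _ = ENNReal.ofReal (2 / N) * T' + 4 * E' := by
          rw [ENNReal.tsum_add, ← tsum_subtype {j : ℤ | (N : ℤ) ≤ |j|} (fun j => 4 * ρ j),
            ENNReal.tsum_mul_left, ENNReal.tsum_mul_left]
          rfl
  -- assemble
  have main : ENNReal.ofReal (∑' n : S, ∑' i : {i : ℤ // i ≠ (n : ℤ)},
        ∑' p : {p : ℤ // p ≠ (n : ℤ)},
          (r ((n : ℤ) + (i : ℤ))) ^ 2 * (r ((n : ℤ) + (p : ℤ))) ^ 2 /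
            (((|(n : ℤ) - (i : ℤ)| : ℤ) : ℝ) * ((|(n : ℤ) - (p : ℤ)| : ℤ) : ℝ))) ≤
      ENNReal.ofReal T * (ENNReal.ofReal (2 / N) * ENNReal.ofReal T +
        4 * ENNReal.ofReal E) := by
    refine h1.trans ?_
    calc ∑' n : S, ∑' i : {i : ℤ // i ≠ (n : ℤ)}, ∑' p : {p : ℤ // p ≠ (n : ℤ)},
        ENNReal.ofReal ((r ((n : ℤ) + (i : ℤ))) ^ 2 * (r ((n : ℤ) + (p : ℤ))) ^ 2 /
          (((|(n : ℤ) - (i : ℤ)| : ℤ) : ℝ) * ((|(n : ℤ) - (p : ℤ)| : ℤ) : ℝ)))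
        ≤ ∑' n : S, P n * Q n := by
          refine ENNReal.tsum_le_tsum fun n => ?_
          rw [← h3 n]
          exact ENNReal.tsum_le_tsum fun i => ENNReal.tsum_le_tsum fun p => h2 n i p
      _ ≤ ∑' n : S, T' * Qbar n :=
          ENNReal.tsum_le_tsum fun n => mul_le_mul' (h4 n) (h5 n)
      _ = T' * ∑' n : S, Qbar n := ENNReal.tsum_mul_left
      _ = T' * ∑' m : ℤ, ρ m * G m := by rw [h6]
      _ ≤ T' * (ENNReal.ofReal (2 / N) * T' + 4 * E') := mul_le_mul' le_rfl h8
      _ = ENNReal.ofReal T * (ENNReal.ofReal (2 / N) * ENNReal.ofReal T +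
            4 * ENNReal.ofReal E) := by rw [hT', hE']
  have hRHS2 : ENNReal.ofReal T * (ENNReal.ofReal (2 / N) * ENNReal.ofReal T +
      4 * ENNReal.ofReal E) ≤ ENNReal.ofReal (4 * (T / N + E) * T) := by
    have e1 : ENNReal.ofReal (2 / N) * ENNReal.ofReal T = ENNReal.ofReal (2 / N * T) :=
      (ENNReal.ofReal_mul (by positivity)).symm
    have e2 : (4 : ℝ≥0∞) * ENNReal.ofReal E = ENNReal.ofReal (4 * E) := by
      rw [ENNReal.ofReal_mul (by norm_num), ENNReal.ofReal_ofNat]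
    rw [e1, e2, ← ENNReal.ofReal_add (by positivity) (by positivity),
      ← ENNReal.ofReal_mul hT0]
    apply ENNReal.ofReal_le_ofReal
    have h1 : 0 ≤ T * T / N := by positivity
    have key : T * (2 / N * T + 4 * E) + 2 * (T * T / N) = 4 * (T / N + E) * T := by
      field_simp
      ring
    linarith [h1]
  have hfin : 0 ≤ 4 * (T / N + E) * T :=
    mul_nonneg (mul_nonneg (by norm_num) (add_nonneg (div_nonneg hT0 hN0.le) hE0)) hT0
  exact (ENNReal.ofReal_le_ofReal_iff hfin).1 (main.trans hRHS2)
end
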